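/- arXiv:2007.08756 — 11 statements merged into one kernel-verified Lean document; each statement's English description precedes it below -/
import Mathlib

section
/- Let a₄, a₆, u, v, A, C be integers with v ≥ 1 squarefree, gcd(u, v) = 1, C ≥ 1, and gcd(A, C) = 1. Set a := Av + C²u and g := gcd(C, v). Then g² divides C³, g² divides v·a, and the integers C³/g² and v·a/g² are coprime. In particular, if a ≠ 0 there exists an integer μ with (C³/g²)·μ ≡ 1 (mod v·a/g²). -/
/-- Part (2) of Lemma 2.2: with `a = A*v + C^2*u` and `g = gcd(C, v)`, we have
`g^2 ∣ C^3`, `g^2 ∣ v*a`, the integers `C^3/g^2` and `v*a/g^2` are coprime, and if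
`a ≠ 0` there is an integer `μ` with `(C^3/g^2)*μ ≡ 1 (mod v*a/g^2)`. -/
theorem stmt_1 (a₄ a₆ u v A C : ℤ) (hv : 1 ≤ v) (hvsf : Squarefree v)
    (huv : Int.gcd u v = 1) (hC : 1 ≤ C) (hAC : Int.gcd A C = 1)
    (a g : ℤ) (ha : a = A * v + C ^ 2 * u) (hg : g = Int.gcd C v) :
    g ^ 2 ∣ C ^ 3 ∧ g ^ 2 ∣ v * a ∧ IsCoprime (C ^ 3 / g ^ 2) (v * a / g ^ 2) ∧
      (a ≠ 0 → ∃ μ : ℤ, (v * a / g ^ 2) ∣ ((C ^ 3 / g ^ 2) * μ - 1)) := by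
  have hgC : g ∣ C := hg ▸ Int.gcd_dvd_left _ _
  have hgv : g ∣ v := hg ▸ Int.gcd_dvd_right _ _
  have h1 : g ^ 2 ∣ C ^ 3 :=
    (pow_dvd_pow_of_dvd hgC 2).trans (pow_dvd_pow C (by norm_num))
  have h2 : g ^ 2 ∣ v * a := by
    rw [ha, mul_add]
    refine dvd_add ?_ ?_
    · exact (pow_dvd_pow_of_dvd hgv 2).trans ⟨A, by ring⟩
    · exact (pow_dvd_pow_of_dvd hgC 2).trans ⟨v * u, by ring⟩
  have hgsf : Squarefree g := hvsf.squarefree_of_dvd hgv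
  have hxC : (C ^ 3 / g ^ 2) ∣ C ^ 3 := ⟨g ^ 2, (Int.ediv_mul_cancel h1).symm⟩
  have hyva : (v * a / g ^ 2) ∣ v * a := ⟨g ^ 2, (Int.ediv_mul_cancel h2).symm⟩
  have hp0 : (0:ℤ) < 1 := one_pos
  have hcop : Int.gcd (C ^ 3 / g ^ 2) (v * a / g ^ 2) = 1 := by
    by_contra hne
    obtain ⟨p, hp, hpd⟩ := Nat.exists_prime_and_dvd hne
    have hpZ : Prime (p : ℤ) := Nat.prime_iff_prime_int.mp hp
    have hpx : (p:ℤ) ∣ C ^ 3 / g ^ 2 :=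
      (Int.natCast_dvd_natCast.mpr hpd).trans (Int.gcd_dvd_left _ _)
    have hpy : (p:ℤ) ∣ v * a / g ^ 2 :=
      (Int.natCast_dvd_natCast.mpr hpd).trans (Int.gcd_dvd_right _ _)
    have hpC : (p:ℤ) ∣ C := hpZ.dvd_of_dvd_pow (hpx.trans hxC)
    have hpA : ¬ (p:ℤ) ∣ A := by
      intro h
      have h' : (p:ℤ) ∣ (Int.gcd A C : ℤ) := Int.dvd_coe_gcd h hpC
      rw [hAC] at h'
      exact hpZ.not_isUnit (isUnit_of_dvd_one (by exact_mod_cast h'))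
    by_cases hpv : (p:ℤ) ∣ v
    · have hpu : ¬ (p:ℤ) ∣ u := by
        intro h
        have h' : (p:ℤ) ∣ (Int.gcd u v : ℤ) := Int.dvd_coe_gcd h hpv
        rw [huv] at h'
        exact hpZ.not_isUnit (isUnit_of_dvd_one (by exact_mod_cast h'))
      have hpg : (p:ℤ) ∣ g := hg ▸ Int.dvd_coe_gcd hpC hpv
      obtain ⟨g', hg'⟩ := hpg
      have hpg' : ¬ (p:ℤ) ∣ g' := by
        rintro ⟨t, ht⟩
        exact hpZ.not_isUnit (hgsf (p:ℤ) ⟨t, by rw [hg', ht]; ring⟩)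
      obtain ⟨v', hv'⟩ := hpv
      have hpv' : ¬ (p:ℤ) ∣ v' := by
        rintro ⟨t, ht⟩
        exact hpZ.not_isUnit (hvsf (p:ℤ) ⟨t, by rw [hv', ht]; ring⟩)
      have hpa : (p:ℤ) ∣ a := by
        rw [ha]
        exact dvd_add (Dvd.dvd.mul_left ⟨v', hv'⟩ A)
          (((dvd_pow hpC two_ne_zero)).mul_right u)
      obtain ⟨a', ha'⟩ := hpa
      have hpne : (p:ℤ) ≠ 0 := hpZ.ne_zero
      have hpa' : ¬ (p:ℤ) ∣ a' := by
        rintro ⟨t, ht⟩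
        have h2a : (p:ℤ) ^ 2 ∣ A * v := by
          have hAv : A * v = a - C ^ 2 * u := by rw [ha]; ring
          rw [hAv]
          exact dvd_sub ⟨t, by rw [ha', ht]; ring⟩
            ((pow_dvd_pow_of_dvd hpC 2).mul_right u)
        rw [hv'] at h2a
        have h2a' : (p:ℤ) ∣ A * v' := by
          obtain ⟨s, hs⟩ := h2a
          refine ⟨s, ?_⟩
          have : (p:ℤ) * (A * v') = (p:ℤ) * ((p:ℤ) * s) := by
            linear_combination hs
          exact mul_left_cancel₀ hpne this
        rcases hpZ.dvd_mul.mp h2a' with h | h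
        · exact hpA h
        · exact hpv' h
      have h3 : (p:ℤ) ^ 3 ∣ v * a := by
        obtain ⟨y', hy'⟩ := hpy
        refine ⟨g' ^ 2 * y', ?_⟩
        have hva : v * a = g ^ 2 * (v * a / g ^ 2) := (Int.mul_ediv_cancel' h2).symm
        rw [hva, hy', hg']; ring
      have hpdvd : (p:ℤ) ∣ v' * a' := by
        obtain ⟨s, hs⟩ := h3
        refine ⟨s, ?_⟩
        have h22 : (p:ℤ) ^ 2 * (v' * a') = (p:ℤ) ^ 2 * ((p:ℤ) * s) := by
          have : v * a = (p:ℤ) ^ 2 * (v' * a') := by rw [hv', ha']; ring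
          rw [← this, hs]; ring
        exact mul_left_cancel₀ (pow_ne_zero 2 hpne) h22
      rcases hpZ.dvd_mul.mp hpdvd with h | h
      · exact hpv' h
      · exact hpa' h
    · have hpva : (p:ℤ) ∣ v * a := hpy.trans hyva
      have hpa : (p:ℤ) ∣ a := by
        rcases hpZ.dvd_mul.mp hpva with h | h
        · exact absurd h hpv
        · exact h
      have hpAv : (p:ℤ) ∣ A * v := by
        have hAv : A * v = a - C ^ 2 * u := by rw [ha]; ring
        rw [hAv]
        exact dvd_sub hpa ((dvd_pow hpC two_ne_zero).mul_right u)
      rcases hpZ.dvd_mul.mp hpAv with h | h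
      · exact hpA h
      · exact hpv h
  have hcop' : IsCoprime (C ^ 3 / g ^ 2) (v * a / g ^ 2) :=
    Int.isCoprime_iff_gcd_eq_one.mpr hcop
  refine ⟨h1, h2, hcop', fun _ => ?_⟩
  obtain ⟨s, t, hst⟩ := hcop'
  exact ⟨s, ⟨-t, by linear_combination hst⟩⟩
end

section
/- Let a₄, a₆, u, v, A, B, C be integers with v ≥ 1, C ≥ 1, and B² = A³ + a₄AC⁴ + a₆C⁶. Set a := Av + C²u, g := gcd(C, v), and d := v(u³ + a₄uv² − a₆v³), and assume a ≠ 0. If μ is an integer with (v·a/g²) ∣ ((C³/g²)·μ − 1), then (v·a/g²) divides μ²·(Bv²/g²)² + d. -/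
/-- Integrality of the third coefficient of `Φ_{u,v}(P, μ)` (part (3) of Lemma 2.2):
if `(C³/g²)·μ ≡ 1 (mod v·a/g²)`, then `(v·a/g²) ∣ μ²·(Bv²/g²)² + d`. -/
theorem stmt_3 (a₄ a₆ u v A B C : ℤ) (hv : 1 ≤ v) (hC : 1 ≤ C)
    (hB : B ^ 2 = A ^ 3 + a₄ * A * C ^ 4 + a₆ * C ^ 6)
    (a g d : ℤ) (ha : a = A * v + C ^ 2 * u) (hg : g = Int.gcd C v)
    (hd : d = v * (u ^ 3 + a₄ * u * v ^ 2 - a₆ * v ^ 3)) (ha0 : a ≠ 0)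
    (μ : ℤ) (hμ : (v * a / g ^ 2) ∣ ((C ^ 3 / g ^ 2) * μ - 1)) :
    (v * a / g ^ 2) ∣ (μ ^ 2 * (B * v ^ 2 / g ^ 2) ^ 2 + d) := by
  have hgC : g ∣ C := by rw [hg]; exact Int.gcd_dvd_left C v
  have hgv : g ∣ v := by rw [hg]; exact Int.gcd_dvd_right C v
  have hg0 : g ≠ 0 := by
    rintro rfl
    have := zero_dvd_iff.mp hgC
    omega
  set m : ℤ := g ^ 2 with hm
  have hm0 : m ≠ 0 := pow_ne_zero 2 hg0
  have hm2 : m ^ 2 ≠ 0 := pow_ne_zero 2 hm0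
  have hmC2 : m ∣ C ^ 2 := pow_dvd_pow_of_dvd hgC 2
  have hmv2 : m ∣ v ^ 2 := pow_dvd_pow_of_dvd hgv 2
  have hmC3 : m ∣ C ^ 3 := hmC2.trans ⟨C, by ring⟩
  have hmva : m ∣ v * a := by
    rw [ha]
    have : v * (A * v + C ^ 2 * u) = A * v ^ 2 + C ^ 2 * (u * v) := by ring
    rw [this]
    exact dvd_add (hmv2.mul_left A) ((hmC2.mul_right _))
  have hmBv : m ∣ B * v ^ 2 := hmv2.mul_left B
  have hmQ : m ∣ v ^ 2 * (A ^ 2 + a₄ * C ^ 4) + C ^ 2 * (u ^ 2 * C ^ 2 - A * v * u) :=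
    dvd_add (hmv2.mul_right _) (hmC2.mul_right _)
  obtain ⟨n, hn⟩ := hmva
  obtain ⟨b, hb⟩ := hmBv
  obtain ⟨c, hc⟩ := hmC3
  obtain ⟨q, hq⟩ := hmQ
  have hva : v * a / m = n := by rw [hn, Int.mul_ediv_cancel_left _ hm0]
  have hbb : B * v ^ 2 / m = b := by rw [hb, Int.mul_ediv_cancel_left _ hm0]
  have hcc : C ^ 3 / m = c := by rw [hc, Int.mul_ediv_cancel_left _ hm0]
  rw [hcc, hva] at hμ
  rw [hva, hbb]
  -- key identity
  have key : m ^ 2 * (b ^ 2 + d * c ^ 2) = m ^ 2 * (n * q) := by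
    have h1 : (m * b) ^ 2 + d * (m * c) ^ 2 = (m * n) * (m * q) := by
      rw [← hb, ← hc, ← hn, ← hq, hd, ha]
      linear_combination (v ^ 4 : ℤ) * hB
    linear_combination h1
  have key2 : b ^ 2 + d * c ^ 2 = n * q := mul_left_cancel₀ hm2 key
  have goal_eq : μ ^ 2 * b ^ 2 + d =
      μ ^ 2 * (b ^ 2 + d * c ^ 2) - d * ((c * μ - 1) * (c * μ + 1)) := by ring
  rw [goal_eq, key2]
  exact dvd_sub ((dvd_mul_right n q).mul_left (μ ^ 2)) ((hμ.mul_right (c * μ + 1)).mul_left d)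
end

section
/- Let a₄, a₆ be integers, let u, v be positive integers with 3u² + a₄v² > 0 and v(u³ + a₄uv² − a₆v³) > 0, and let A, B, C be integers with C ≥ 1 and B² = A³ + a₄AC⁴ + a₆C⁶. Then Av + C²u > 0. -/
/-- For a map-suitable pair `(u, v)` and a rational point `(A/C², B/C³)` of `E`, the
leading coefficient `a = Av + C²u` of the form `Φ_{u,v}(P, μ)` is positive. -/
theorem stmt_5 (a₄ a₆ u v A B C : ℤ) (hu : 0 < u) (hv : 0 < v)
    (h1 : 0 < 3 * u ^ 2 + a₄ * v ^ 2)
    (h2 : 0 < v * (u ^ 3 + a₄ * u * v ^ 2 - a₆ * v ^ 3))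
    (hC : 1 ≤ C) (hB : B ^ 2 = A ^ 3 + a₄ * A * C ^ 4 + a₆ * C ^ 6) :
    0 < A * v + C ^ 2 * u := by
  by_contra h
  push_neg at h
  have hC0 : 0 < C := hC
  have hd : 0 < u ^ 3 + a₄ * u * v ^ 2 - a₆ * v ^ 3 := by nlinarith [h2, hv]
  -- key identity:
  have key : v ^ 3 * B ^ 2 + C ^ 6 * (u ^ 3 + a₄ * u * v ^ 2 - a₆ * v ^ 3)
      = (A * v + C ^ 2 * u) *
        (A ^ 2 * v ^ 2 - A * v * u * C ^ 2 + u ^ 2 * C ^ 4 + a₄ * C ^ 4 * v ^ 2) := by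
    rw [hB]; ring
  -- Av ≤ -uC² < 0, so Q ≥ C⁴(3u²+a₄v²) > 0
  have hAv : A * v ≤ -(C ^ 2 * u) := by linarith
  have hQ : 0 < A ^ 2 * v ^ 2 - A * v * u * C ^ 2 + u ^ 2 * C ^ 4 + a₄ * C ^ 4 * v ^ 2 := by
    have hCu : 0 < C ^ 2 * u := by positivity
    have h1' : A ^ 2 * v ^ 2 ≥ (C ^ 2 * u) ^ 2 := by nlinarith
    have h2' : -(A * v * u * C ^ 2) ≥ (C ^ 2 * u) ^ 2 := by nlinarith
    have h3' : 0 < C ^ 4 * (3 * u ^ 2 + a₄ * v ^ 2) := by positivity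
    nlinarith
  have hlhs : 0 < v ^ 3 * B ^ 2 + C ^ 6 * (u ^ 3 + a₄ * u * v ^ 2 - a₆ * v ^ 3) := by positivity
  nlinarith [mul_nonpos_of_nonpos_of_nonneg h hQ.le]
end

section
/- Let a₄, a₆, M, N and A₁, A₂, A₃, C₁, C₂, C₃ be integers with gcd(Aᵢ, Cᵢ) = 1 for each i, set C := C₁C₂C₃, and assume the identity of polynomials in ℤ[x]: (C₁²x − A₁)(C₂²x − A₂)(C₃²x − A₃) = C²(x³ + a₄x + a₆) − (Mx + N)². Then for every permutation {i, j, k} of {1, 2, 3}, the product CᵢCⱼ divides MN + AᵢAⱼCₖ². -/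
open Polynomial in
/-- Divisibility condition (7) of Lemma 2.7: for every permutation `{i, j, k}` of
`{1, 2, 3}`, `CᵢCⱼ ∣ MN + AᵢAⱼCₖ²` (the expression is symmetric in `i, j`, so the
three stated divisibilities cover all six permutations). -/
theorem stmt_7 (a₄ a₆ M N A₁ A₂ A₃ C₁ C₂ C₃ : ℤ)
    (h₁ : Int.gcd A₁ C₁ = 1) (h₂ : Int.gcd A₂ C₂ = 1) (h₃ : Int.gcd A₃ C₃ = 1)
    (Cp : ℤ) (hCp : Cp = C₁ * C₂ * C₃)
    (hline : (C (C₁ ^ 2) * X - C A₁) * (C (C₂ ^ 2) * X - C A₂) * (C (C₃ ^ 2) * X - C A₃)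
      = C (Cp ^ 2) * (X ^ 3 + C a₄ * X + C a₆) - (C M * X + C N) ^ 2) :
    C₁ * C₂ ∣ M * N + A₁ * A₂ * C₃ ^ 2 ∧
    C₁ * C₃ ∣ M * N + A₁ * A₃ * C₂ ^ 2 ∧
    C₂ * C₃ ∣ M * N + A₂ * A₃ * C₁ ^ 2 := by
  subst hCp
  have e0 := congrArg (eval 0) hline
  have e1 := congrArg (eval 1) hline
  have em := congrArg (eval (-1)) hline
  have e2 := congrArg (eval 2) hline
  simp only [eval_mul, eval_sub, eval_add, eval_pow, eval_C, eval_X] at e0 e1 em e2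
  have hS : M ^ 2 = A₁ * C₂ ^ 2 * C₃ ^ 2 + A₂ * C₁ ^ 2 * C₃ ^ 2 + A₃ * C₁ ^ 2 * C₂ ^ 2 := by
    have h2S : 2 * M ^ 2
        = 2 * (A₁ * C₂ ^ 2 * C₃ ^ 2 + A₂ * C₁ ^ 2 * C₃ ^ 2 + A₃ * C₁ ^ 2 * C₂ ^ 2) := by
      linear_combination e1 + em - 2 * e0
    linarith
  have hT : 2 * (M * N) = (C₁ * C₂ * C₃) ^ 2 * a₄
      - A₁ * A₂ * C₃ ^ 2 - A₁ * A₃ * C₂ ^ 2 - A₂ * A₃ * C₁ ^ 2 := by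
    have h6T : 6 * (2 * (M * N)) = 6 * ((C₁ * C₂ * C₃) ^ 2 * a₄
        - A₁ * A₂ * C₃ ^ 2 - A₁ * A₃ * C₂ ^ 2 - A₂ * A₃ * C₁ ^ 2) := by
      linear_combination 6 * e1 - 2 * em - e2 - 3 * e0
    linarith
  have hU : N ^ 2 = (C₁ * C₂ * C₃) ^ 2 * a₆ + A₁ * A₂ * A₃ := by
    linear_combination e0
  have S := A₁ * C₂ ^ 2 * C₃ ^ 2 + A₂ * C₁ ^ 2 * C₃ ^ 2 + A₃ * C₁ ^ 2 * C₂ ^ 2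
  refine ⟨?_, ?_, ?_⟩
  · refine (Int.pow_dvd_pow_iff two_ne_zero).mp
      ⟨C₃ ^ 2 * a₆ * (A₁ * C₂ ^ 2 * C₃ ^ 2 + A₂ * C₁ ^ 2 * C₃ ^ 2 + A₃ * C₁ ^ 2 * C₂ ^ 2)
        + A₁ * A₂ * A₃ ^ 2 + A₁ * A₂ * C₃ ^ 4 * a₄, ?_⟩
    linear_combination N ^ 2 * hS
      + (A₁ * C₂ ^ 2 * C₃ ^ 2 + A₂ * C₁ ^ 2 * C₃ ^ 2 + A₃ * C₁ ^ 2 * C₂ ^ 2) * hU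
      + (A₁ * A₂ * C₃ ^ 2) * hT
  · refine (Int.pow_dvd_pow_iff two_ne_zero).mp
      ⟨C₂ ^ 2 * a₆ * (A₁ * C₂ ^ 2 * C₃ ^ 2 + A₂ * C₁ ^ 2 * C₃ ^ 2 + A₃ * C₁ ^ 2 * C₂ ^ 2)
        + A₁ * A₃ * A₂ ^ 2 + A₁ * A₃ * C₂ ^ 4 * a₄, ?_⟩
    linear_combination N ^ 2 * hS
      + (A₁ * C₂ ^ 2 * C₃ ^ 2 + A₂ * C₁ ^ 2 * C₃ ^ 2 + A₃ * C₁ ^ 2 * C₂ ^ 2) * hU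
      + (A₁ * A₃ * C₂ ^ 2) * hT
  · refine (Int.pow_dvd_pow_iff two_ne_zero).mp
      ⟨C₁ ^ 2 * a₆ * (A₁ * C₂ ^ 2 * C₃ ^ 2 + A₂ * C₁ ^ 2 * C₃ ^ 2 + A₃ * C₁ ^ 2 * C₂ ^ 2)
        + A₂ * A₃ * A₁ ^ 2 + A₂ * A₃ * C₁ ^ 4 * a₄, ?_⟩
    linear_combination N ^ 2 * hS
      + (A₁ * C₂ ^ 2 * C₃ ^ 2 + A₂ * C₁ ^ 2 * C₃ ^ 2 + A₃ * C₁ ^ 2 * C₂ ^ 2) * hU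
      + (A₂ * A₃ * C₁ ^ 2) * hT
end

section
/- Let a₄, a₆, M, N and A₁, A₂, A₃, C₁, C₂, C₃ be integers with gcd(Aᵢ, Cᵢ) = 1 for each i, set C := C₁C₂C₃, and assume the identity of polynomials in ℤ[x]: (C₁²x − A₁)(C₂²x − A₂)(C₃²x − A₃) = C²(x³ + a₄x + a₆) − (Mx + N)². Then for every permutation {i, j, k} of {1, 2, 3}, the product CᵢCⱼ divides AᵢAⱼM + AᵢCⱼ²N + AⱼCᵢ²N. -/
open Polynomial in
/-- Divisibility condition (8) of Lemma 2.7: for every permutation `{i, j, k}` of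
`{1, 2, 3}`, `CᵢCⱼ ∣ AᵢAⱼM + AᵢCⱼ²N + AⱼCᵢ²N` (the expression is symmetric in `i, j`,
so the three stated divisibilities cover all six permutations). -/
theorem stmt_8 (a₄ a₆ M N A₁ A₂ A₃ C₁ C₂ C₃ : ℤ)
    (h₁ : Int.gcd A₁ C₁ = 1) (h₂ : Int.gcd A₂ C₂ = 1) (h₃ : Int.gcd A₃ C₃ = 1)
    (Cp : ℤ) (hCp : Cp = C₁ * C₂ * C₃)
    (hline : (C (C₁ ^ 2) * X - C A₁) * (C (C₂ ^ 2) * X - C A₂) * (C (C₃ ^ 2) * X - C A₃)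
      = C (Cp ^ 2) * (X ^ 3 + C a₄ * X + C a₆) - (C M * X + C N) ^ 2) :
    C₁ * C₂ ∣ A₁ * A₂ * M + A₁ * C₂ ^ 2 * N + A₂ * C₁ ^ 2 * N ∧
    C₁ * C₃ ∣ A₁ * A₃ * M + A₁ * C₃ ^ 2 * N + A₃ * C₁ ^ 2 * N ∧
    C₂ * C₃ ∣ A₂ * A₃ * M + A₂ * C₃ ^ 2 * N + A₃ * C₂ ^ 2 * N := by
  subst hCp
  -- rewrite the polynomial identity in expanded (coefficient) form
  have key : (C (C₁ ^ 2) * X - C A₁) * (C (C₂ ^ 2) * X - C A₂) * (C (C₃ ^ 2) * X - C A₃)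
      - (C ((C₁ * C₂ * C₃) ^ 2) * (X ^ 3 + C a₄ * X + C a₆) - (C M * X + C N) ^ 2)
    = (C (-(A₁*A₂*A₃) - ((C₁*C₂*C₃)^2*a₆ - N^2))
      + C ((A₁*A₂*C₃^2 + A₁*A₃*C₂^2 + A₂*A₃*C₁^2) - ((C₁*C₂*C₃)^2*a₄ - 2*M*N)) * X
      + C (-(A₁*C₂^2*C₃^2 + A₂*C₁^2*C₃^2 + A₃*C₁^2*C₂^2) + M^2) * X^2
      + C (C₁^2*C₂^2*C₃^2 - (C₁*C₂*C₃)^2) * X^3 : ℤ[X]) := by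
    simp only [C_mul, C_add, C_sub, C_neg, C_pow, map_ofNat]
    ring
  rw [hline, sub_self] at key
  have hc2 := congrArg (fun p => Polynomial.coeff p 2) key.symm
  have hc1 := congrArg (fun p => Polynomial.coeff p 1) key.symm
  have hc0 := congrArg (fun p => Polynomial.coeff p 0) key.symm
  simp only [coeff_add, coeff_C_mul, coeff_C, coeff_X, coeff_X_pow, coeff_zero] at hc2 hc1 hc0
  norm_num at hc2 hc1 hc0
  -- clean coefficient identities
  have e2 : A₁*C₂^2*C₃^2 + A₂*C₁^2*C₃^2 + A₃*C₁^2*C₂^2 = M^2 := by linear_combination -hc2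
  have e1 : A₁*A₂*C₃^2 + A₁*A₃*C₂^2 + A₂*A₃*C₁^2 = (C₁*C₂*C₃)^2*a₄ - 2*M*N := by
    linear_combination hc1
  have e0 : -(A₁*A₂*A₃) = (C₁*C₂*C₃)^2*a₆ - N^2 := by linear_combination hc0
  refine ⟨?_, ?_, ?_⟩
  · rw [← Int.pow_dvd_pow_iff two_ne_zero]
    refine ⟨A₁^2*A₂^2*A₃ + (A₁^2*A₂*C₂^2 + A₁*A₂^2*C₁^2)*C₃^2*a₄
      + (A₁^2*C₂^4 + A₂^2*C₁^4 + 2*A₁*A₂*C₁^2*C₂^2)*C₃^2*a₆, ?_⟩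
    linear_combination (-(A₁^2*A₂^2)) * e2 + (A₁^2*A₂*C₂^2 + A₁*A₂^2*C₁^2) * e1
      + (A₁*C₂^2 + A₂*C₁^2)^2 * e0
  · rw [← Int.pow_dvd_pow_iff two_ne_zero]
    refine ⟨A₁^2*A₃^2*A₂ + (A₁^2*A₃*C₃^2 + A₁*A₃^2*C₁^2)*C₂^2*a₄
      + (A₁^2*C₃^4 + A₃^2*C₁^4 + 2*A₁*A₃*C₁^2*C₃^2)*C₂^2*a₆, ?_⟩
    linear_combination (-(A₁^2*A₃^2)) * e2 + (A₁^2*A₃*C₃^2 + A₁*A₃^2*C₁^2) * e1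
      + (A₁*C₃^2 + A₃*C₁^2)^2 * e0
  · rw [← Int.pow_dvd_pow_iff two_ne_zero]
    refine ⟨A₂^2*A₃^2*A₁ + (A₂^2*A₃*C₃^2 + A₂*A₃^2*C₂^2)*C₁^2*a₄
      + (A₂^2*C₃^4 + A₃^2*C₂^4 + 2*A₂*A₃*C₂^2*C₃^2)*C₁^2*a₆, ?_⟩
    linear_combination (-(A₂^2*A₃^2)) * e2 + (A₂^2*A₃*C₃^2 + A₂*A₃^2*C₂^2) * e1
      + (A₂*C₃^2 + A₃*C₂^2)^2 * e0
end

section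
/- Let a₄, a₆ be integers, let u, v be positive integers with v squarefree and gcd(u, v) = 1, and for i = 1, 2, 3 let Aᵢ, Bᵢ, Cᵢ be integers with Cᵢ ≥ 1, gcd(Aᵢ, Cᵢ) = gcd(Bᵢ, Cᵢ) = 1, and Bᵢ² = Aᵢ³ + a₄AᵢCᵢ⁴ + a₆Cᵢ⁶. Let M, N be integers such that, with C := C₁C₂C₃, the polynomial identity (C₁²x − A₁)(C₂²x − A₂)(C₃²x − A₃) = C²(x³ + a₄x + a₆) − (Mx + N)² holds in ℤ[x]. Set aᵢ := Aᵢv + Cᵢ²u, b := Nv − Mu, gᵢ := gcd(Cᵢ, v), and let μᵢ, ℓᵢ be integers with Cᵢ³μᵢ + v·aᵢ·ℓᵢ = gᵢ². Set Qᵢ := b·v·ℓᵢ − M·Cᵢ·μᵢ. Then for each i = 1, 2, 3, the product g₁g₂g₃ divides v·Qᵢ. -/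
lemma aux_cop {g w : ℤ} (hg : Squarefree g) :
    IsCoprime (g / (Int.gcd g w : ℤ)) w := by
  have he : (Int.gcd g w : ℤ) ∣ g := Int.gcd_dvd_left _ _
  rw [Int.isCoprime_iff_gcd_eq_one]
  set q : ℤ := g / (Int.gcd g w : ℤ) with hq
  have hqg : q ∣ g := ⟨(Int.gcd g w : ℤ), (Int.ediv_mul_cancel he).symm⟩
  set c := Int.gcd q w with hc
  have hc1 : (c : ℤ) ∣ q := Int.gcd_dvd_left _ _
  have hc2 : (c : ℤ) ∣ w := Int.gcd_dvd_right _ _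
  have hcg : (c : ℤ) ∣ g := hc1.trans hqg
  have hce : (c : ℤ) ∣ (Int.gcd g w : ℤ) := by exact_mod_cast Int.dvd_gcd hcg hc2
  have hcc : (c : ℤ) * (c : ℤ) ∣ g := by
    calc (c : ℤ) * (c : ℤ) ∣ q * (Int.gcd g w : ℤ) := mul_dvd_mul hc1 hce
    _ = g := Int.ediv_mul_cancel he
  have := hg _ hcc
  rcases Int.isUnit_iff.mp this with h | h
  · exact_mod_cast h
  · omega

lemma aux_pair {x y v M : ℤ} (hx : x ∣ v) (hy : y ∣ v) (hsy : Squarefree y)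
    (hM : (Int.gcd y x : ℤ) ∣ M) : x * y ∣ M * v := by
  set d : ℤ := (Int.gcd y x : ℤ) with hd
  have hdy : d ∣ y := Int.gcd_dvd_left _ _
  have hcop : IsCoprime x (y / d) := (aux_cop hsy).symm
  have hyd' : y / d ∣ y := Dvd.intro d (Int.ediv_mul_cancel hdy)
  have hyd : y / d ∣ v := hyd'.trans hy
  have h1 : x * (y / d) ∣ v := hcop.mul_dvd hx hyd
  have h2 : d * (y / d) = y := Int.mul_ediv_cancel' hdy
  have heq : x * y = d * (x * (y / d)) := by
    conv_lhs => rw [← h2]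
    ring
  rw [heq]
  exact mul_dvd_mul hM h1

open Polynomial in
theorem stmt_9 (a₄ a₆ u v : ℤ) (hu : 0 < u) (hv : 0 < v) (hvsf : Squarefree v)
    (huv : Int.gcd u v = 1)
    (A₁ A₂ A₃ B₁ B₂ B₃ C₁ C₂ C₃ : ℤ)
    (hC₁ : 1 ≤ C₁) (hC₂ : 1 ≤ C₂) (hC₃ : 1 ≤ C₃)
    (hAC₁ : Int.gcd A₁ C₁ = 1) (hAC₂ : Int.gcd A₂ C₂ = 1) (hAC₃ : Int.gcd A₃ C₃ = 1)
    (hBC₁ : Int.gcd B₁ C₁ = 1) (hBC₂ : Int.gcd B₂ C₂ = 1) (hBC₃ : Int.gcd B₃ C₃ = 1)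
    (hB₁ : B₁ ^ 2 = A₁ ^ 3 + a₄ * A₁ * C₁ ^ 4 + a₆ * C₁ ^ 6)
    (hB₂ : B₂ ^ 2 = A₂ ^ 3 + a₄ * A₂ * C₂ ^ 4 + a₆ * C₂ ^ 6)
    (hB₃ : B₃ ^ 2 = A₃ ^ 3 + a₄ * A₃ * C₃ ^ 4 + a₆ * C₃ ^ 6)
    (M N Cp : ℤ) (hCp : Cp = C₁ * C₂ * C₃)
    (hline : (C (C₁ ^ 2) * X - C A₁) * (C (C₂ ^ 2) * X - C A₂) * (C (C₃ ^ 2) * X - C A₃)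
      = C (Cp ^ 2) * (X ^ 3 + C a₄ * X + C a₆) - (C M * X + C N) ^ 2)
    (a₁ a₂ a₃ b g₁ g₂ g₃ : ℤ)
    (ha₁ : a₁ = A₁ * v + C₁ ^ 2 * u) (ha₂ : a₂ = A₂ * v + C₂ ^ 2 * u)
    (ha₃ : a₃ = A₃ * v + C₃ ^ 2 * u) (hb : b = N * v - M * u)
    (hg₁ : g₁ = Int.gcd C₁ v) (hg₂ : g₂ = Int.gcd C₂ v) (hg₃ : g₃ = Int.gcd C₃ v)
    (μ₁ μ₂ μ₃ l₁ l₂ l₃ : ℤ)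
    (hμ₁ : C₁ ^ 3 * μ₁ + v * a₁ * l₁ = g₁ ^ 2)
    (hμ₂ : C₂ ^ 3 * μ₂ + v * a₂ * l₂ = g₂ ^ 2)
    (hμ₃ : C₃ ^ 3 * μ₃ + v * a₃ * l₃ = g₃ ^ 2)
    (Q₁ Q₂ Q₃ : ℤ)
    (hQ₁ : Q₁ = b * v * l₁ - M * C₁ * μ₁)
    (hQ₂ : Q₂ = b * v * l₂ - M * C₂ * μ₂)
    (hQ₃ : Q₃ = b * v * l₃ - M * C₃ * μ₃) :
    g₁ * g₂ * g₃ ∣ v * Q₁ ∧ g₁ * g₂ * g₃ ∣ v * Q₂ ∧ g₁ * g₂ * g₃ ∣ v * Q₃ := by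
  -- Extract the coefficient identity M² = A₁C₂²C₃² + A₂C₁²C₃² + A₃C₁²C₂²
  have e0 := congrArg (Polynomial.eval 0) hline
  have e1 := congrArg (Polynomial.eval 1) hline
  have em1 := congrArg (Polynomial.eval (-1)) hline
  simp only [Polynomial.eval_mul, Polynomial.eval_sub, Polynomial.eval_add,
    Polynomial.eval_pow, Polynomial.eval_C, Polynomial.eval_X] at e0 e1 em1
  have hM2 : M ^ 2 = A₁ * C₂ ^ 2 * C₃ ^ 2 + A₂ * C₁ ^ 2 * C₃ ^ 2 + A₃ * C₁ ^ 2 * C₂ ^ 2 := by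
    have h2 : (2 : ℤ) * (M ^ 2)
        = 2 * (A₁ * C₂ ^ 2 * C₃ ^ 2 + A₂ * C₁ ^ 2 * C₃ ^ 2 + A₃ * C₁ ^ 2 * C₂ ^ 2) := by
      linear_combination e1 + em1 - 2 * e0
    exact mul_left_cancel₀ two_ne_zero h2
  -- basic divisibilities
  have hg₁v : g₁ ∣ v := hg₁ ▸ Int.gcd_dvd_right _ _
  have hg₂v : g₂ ∣ v := hg₂ ▸ Int.gcd_dvd_right _ _
  have hg₃v : g₃ ∣ v := hg₃ ▸ Int.gcd_dvd_right _ _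
  have hg₁C : g₁ ∣ C₁ := hg₁ ▸ Int.gcd_dvd_left _ _
  have hg₂C : g₂ ∣ C₂ := hg₂ ▸ Int.gcd_dvd_left _ _
  have hg₃C : g₃ ∣ C₃ := hg₃ ▸ Int.gcd_dvd_left _ _
  have hsf₁ : Squarefree g₁ := Squarefree.squarefree_of_dvd hg₁v hvsf
  have hsf₂ : Squarefree g₂ := Squarefree.squarefree_of_dvd hg₂v hvsf
  have hsf₃ : Squarefree g₃ := Squarefree.squarefree_of_dvd hg₃v hvsf
  -- pairwise gcds divide M
  have hdM₂₃ : (Int.gcd g₂ g₃ : ℤ) ∣ M := by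
    obtain ⟨x, hx⟩ : (Int.gcd g₂ g₃ : ℤ) ∣ C₂ := (Int.gcd_dvd_left _ _).trans hg₂C
    obtain ⟨y, hy⟩ : (Int.gcd g₂ g₃ : ℤ) ∣ C₃ := (Int.gcd_dvd_right _ _).trans hg₃C
    refine (Int.pow_dvd_pow_iff two_ne_zero).mp
      ⟨A₁ * x ^ 2 * y ^ 2 * (Int.gcd g₂ g₃ : ℤ) ^ 2 + A₂ * C₁ ^ 2 * y ^ 2
        + A₃ * C₁ ^ 2 * x ^ 2, ?_⟩
    rw [hM2, hx, hy]; ring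
  have hdM₁₃ : (Int.gcd g₁ g₃ : ℤ) ∣ M := by
    obtain ⟨x, hx⟩ : (Int.gcd g₁ g₃ : ℤ) ∣ C₁ := (Int.gcd_dvd_left _ _).trans hg₁C
    obtain ⟨y, hy⟩ : (Int.gcd g₁ g₃ : ℤ) ∣ C₃ := (Int.gcd_dvd_right _ _).trans hg₃C
    refine (Int.pow_dvd_pow_iff two_ne_zero).mp
      ⟨A₁ * C₂ ^ 2 * y ^ 2 + A₂ * x ^ 2 * y ^ 2 * (Int.gcd g₁ g₃ : ℤ) ^ 2
        + A₃ * x ^ 2 * C₂ ^ 2, ?_⟩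
    rw [hM2, hx, hy]; ring
  have hdM₁₂ : (Int.gcd g₁ g₂ : ℤ) ∣ M := by
    obtain ⟨x, hx⟩ : (Int.gcd g₁ g₂ : ℤ) ∣ C₁ := (Int.gcd_dvd_left _ _).trans hg₁C
    obtain ⟨y, hy⟩ : (Int.gcd g₁ g₂ : ℤ) ∣ C₂ := (Int.gcd_dvd_right _ _).trans hg₂C
    refine (Int.pow_dvd_pow_iff two_ne_zero).mp
      ⟨A₁ * y ^ 2 * C₃ ^ 2 + A₂ * x ^ 2 * C₃ ^ 2
        + A₃ * x ^ 2 * y ^ 2 * (Int.gcd g₁ g₂ : ℤ) ^ 2, ?_⟩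
    rw [hM2, hx, hy]; ring
  -- pairwise products divide M * v
  have hpair₂₃ : g₂ * g₃ ∣ M * v :=
    aux_pair hg₂v hg₃v hsf₃ (by rw [Int.gcd_comm g₃ g₂]; exact hdM₂₃)
  have hpair₁₃ : g₁ * g₃ ∣ M * v :=
    aux_pair hg₁v hg₃v hsf₃ (by rw [Int.gcd_comm g₃ g₁]; exact hdM₁₃)
  have hpair₁₂ : g₁ * g₂ ∣ M * v :=
    aux_pair hg₁v hg₂v hsf₂ (by rw [Int.gcd_comm g₂ g₁]; exact hdM₁₂)
  -- Claim A : g₁g₂g₃ ∣ Cᵢ * (M * v)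
  have hA₁ : g₁ * g₂ * g₃ ∣ C₁ * (M * v) := by
    rw [mul_assoc]; exact mul_dvd_mul hg₁C hpair₂₃
  have hA₂ : g₁ * g₂ * g₃ ∣ C₂ * (M * v) := by
    rw [show g₁ * g₂ * g₃ = g₂ * (g₁ * g₃) from by ring]
    exact mul_dvd_mul hg₂C hpair₁₃
  have hA₃ : g₁ * g₂ * g₃ ∣ C₃ * (M * v) := by
    rw [show g₁ * g₂ * g₃ = g₃ * (g₁ * g₂) from by ring]
    exact mul_dvd_mul hg₃C hpair₁₂
  -- Claim B : g₁g₂g₃ ∣ b * v * v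
  have hB : g₁ * g₂ * g₃ ∣ b * v * v := by
    set d : ℤ := (Int.gcd g₂ g₃ : ℤ) with hd
    set t : ℤ := (Int.gcd g₁ d : ℤ) with ht
    have htg₁ : t ∣ g₁ := Int.gcd_dvd_left _ _
    have htd : t ∣ d := Int.gcd_dvd_right _ _
    have htM : t ∣ M := htd.trans hdM₂₃
    have htv : t ∣ v := htg₁.trans hg₁v
    have htb : t ∣ b := by rw [hb]; exact dvd_sub (htv.mul_left N) (htM.mul_right u)
    have hdg₂ : d ∣ g₂ := Int.gcd_dvd_left _ _
    have hdg₃ : d ∣ g₃ := Int.gcd_dvd_right _ _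
    have hcop1 : IsCoprime (g₁ / t) d := aux_cop hsf₁
    have hq1 : g₁ / t ∣ g₁ := Dvd.intro t (Int.ediv_mul_cancel htg₁)
    have h1v : (g₁ / t) * d ∣ v := hcop1.mul_dvd (hq1.trans hg₁v) (hdg₂.trans hg₂v)
    have hcop2 : IsCoprime (g₃ / d) g₂ := by
      have h := aux_cop (w := g₂) hsf₃
      rwa [Int.gcd_comm g₃ g₂, ← hd] at h
    have hq2 : g₃ / d ∣ g₃ := Dvd.intro d (Int.ediv_mul_cancel hdg₃)
    have h2v : g₂ * (g₃ / d) ∣ v := hcop2.symm.mul_dvd hg₂v (hq2.trans hg₃v)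
    have e1 : t * (g₁ / t) = g₁ := Int.mul_ediv_cancel' htg₁
    have e2 : d * (g₃ / d) = g₃ := Int.mul_ediv_cancel' hdg₃
    have hdec : g₁ * g₂ * g₃ = t * ((g₁ / t) * d) * (g₂ * (g₃ / d)) := by
      conv_lhs => rw [← e1, ← e2]
      ring
    rw [hdec]
    exact mul_dvd_mul (mul_dvd_mul htb h1v) h2v
  refine ⟨?_, ?_, ?_⟩
  · rw [show v * Q₁ = (b * v * v) * l₁ - (C₁ * (M * v)) * μ₁ from by rw [hQ₁]; ring]
    exact dvd_sub (hB.mul_right l₁) (hA₁.mul_right μ₁)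
  · rw [show v * Q₂ = (b * v * v) * l₂ - (C₂ * (M * v)) * μ₂ from by rw [hQ₂]; ring]
    exact dvd_sub (hB.mul_right l₂) (hA₂.mul_right μ₂)
  · rw [show v * Q₃ = (b * v * v) * l₃ - (C₃ * (M * v)) * μ₃ from by rw [hQ₃]; ring]
    exact dvd_sub (hB.mul_right l₃) (hA₃.mul_right μ₃)
end

section
/- Let a₄, a₆ be integers, let u, v be positive integers with v squarefree and gcd(u, v) = 1, and for i = 1, 2, 3 let Aᵢ, Bᵢ, Cᵢ be integers with Cᵢ ≥ 1, gcd(Aᵢ, Cᵢ) = gcd(Bᵢ, Cᵢ) = 1, and Bᵢ² = Aᵢ³ + a₄AᵢCᵢ⁴ + a₆Cᵢ⁶. Let M, N be integers such that, with C := C₁C₂C₃, the polynomial identity (C₁²x − A₁)(C₂²x − A₂)(C₃²x − A₃) = C²(x³ + a₄x + a₆) − (Mx + N)² holds in ℤ[x]. Set aᵢ := Aᵢv + Cᵢ²u, b := Nv − Mu, gᵢ := gcd(Cᵢ, v), let μᵢ, ℓᵢ be integers with Cᵢ³μᵢ + v·aᵢ·ℓᵢ = gᵢ², and set Qᵢ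 := b·v·ℓᵢ − M·Cᵢ·μᵢ. Then for every permutation {i, j, k} of {1, 2, 3}, the product C·gᵢ·gⱼ·gₖ divides v·Qⱼ·Qₖ − aᵢ·gⱼ²·gₖ². -/
theorem auxP (a₄ a₆ M N A1 A2 A3 B1 C1 C2 C3 : ℤ) (hC1 : C1 ≠ 0)
    (hB1 : B1 ^ 2 = A1 ^ 3 + a₄ * A1 * C1 ^ 4 + a₆ * C1 ^ 6)
    (he0 : N ^ 2 = A1 * A2 * A3 + (C1 * C2 * C3) ^ 2 * a₆)
    (he1 : 2 * (M * N) = (C1 * C2 * C3) ^ 2 * a₄ - (A1 * A2 * C3 ^ 2 + A1 * A3 * C2 ^ 2 + A2 * A3 * C1 ^ 2))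
    (he2 : M ^ 2 = A1 * C2 ^ 2 * C3 ^ 2 + A2 * C1 ^ 2 * C3 ^ 2 + A3 * C1 ^ 2 * C2 ^ 2) :
    C2 * C3 ∣ M * A1 + N * C1 ^ 2 := by
  have hsq : (C1 * (M * A1 + N * C1 ^ 2)) ^ 2 = (C1 * (C2 * C3 * B1)) ^ 2 := by
    linear_combination (C1 ^ 2 * A1 ^ 2) * he2 + (A1 * C1 ^ 4) * he1 + (C1 ^ 6) * he0
      - (C1 ^ 2 * C2 ^ 2 * C3 ^ 2) * hB1
  have hz : (C1 * (M * A1 + N * C1 ^ 2) - C1 * (C2 * C3 * B1)) *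
      (C1 * (M * A1 + N * C1 ^ 2) + C1 * (C2 * C3 * B1)) = 0 := by linear_combination hsq
  rcases mul_eq_zero.mp hz with h | h
  · exact ⟨B1, mul_left_cancel₀ hC1 (by linarith)⟩
  · exact ⟨-B1, mul_left_cancel₀ hC1 (by linarith [h]; )⟩



theorem auxT (a₄ a₆ M N A1 A2 A3 B1 B2 B3 C1 C2 C3 : ℤ)
    (hC1 : C1 ≠ 0) (hC2 : C2 ≠ 0) (hC3 : C3 ≠ 0)
    (hAC1 : Int.gcd A1 C1 = 1) (hAC2 : Int.gcd A2 C2 = 1) (hAC3 : Int.gcd A3 C3 = 1)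
    (hB1 : B1 ^ 2 = A1 ^ 3 + a₄ * A1 * C1 ^ 4 + a₆ * C1 ^ 6)
    (hB2 : B2 ^ 2 = A2 ^ 3 + a₄ * A2 * C2 ^ 4 + a₆ * C2 ^ 6)
    (hB3 : B3 ^ 2 = A3 ^ 3 + a₄ * A3 * C3 ^ 4 + a₆ * C3 ^ 6)
    (he0 : N ^ 2 = A1 * A2 * A3 + (C1 * C2 * C3) ^ 2 * a₆)
    (he1 : 2 * (M * N) = (C1 * C2 * C3) ^ 2 * a₄ - (A1 * A2 * C3 ^ 2 + A1 * A3 * C2 ^ 2 + A2 * A3 * C1 ^ 2))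
    (he2 : M ^ 2 = A1 * C2 ^ 2 * C3 ^ 2 + A2 * C1 ^ 2 * C3 ^ 2 + A3 * C1 ^ 2 * C2 ^ 2) :
    C1 * C2 ∣ M * N + A1 * A2 * C3 ^ 2 := by
  have hP1 : C2 * C3 ∣ M * A1 + N * C1 ^ 2 := auxP a₄ a₆ M N A1 A2 A3 B1 C1 C2 C3 hC1 hB1 he0 he1 he2
  have hP2 : C1 * C3 ∣ M * A2 + N * C2 ^ 2 := auxP a₄ a₆ M N A2 A1 A3 B2 C2 C1 C3 hC2 hB2
    (by linear_combination he0) (by linear_combination he1) (by linear_combination he2)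
  have hP3 : C1 * C2 ∣ M * A3 + N * C3 ^ 2 := auxP a₄ a₆ M N A3 A1 A2 B3 C3 C1 C2 hC3 hB3
    (by linear_combination he0) (by linear_combination he1) (by linear_combination he2)
  have hP1' : C2 ∣ M * A1 + N * C1 ^ 2 := (dvd_mul_right C2 C3).trans hP1
  have hP2' : C1 ∣ M * A2 + N * C2 ^ 2 := (dvd_mul_right C1 C3).trans hP2
  -- two multiplier divisibilities
  have hd2 : C1 * C2 ∣ A3 * (M * N + A1 * A2 * C3 ^ 2) := by
    have hI2 : A3 * (M * N + A1 * A2 * C3 ^ 2)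
        = N * (M * A3 + N * C3 ^ 2) - (C1 * C2) * (C1 * C2 * C3 ^ 4 * a₆) := by
      linear_combination (-C3 ^ 2) * he0
    rw [hI2]
    exact dvd_sub (hP3.mul_left N) (dvd_mul_right _ _)
  have hd1 : C1 * C2 ∣ (A1 * C2 ^ 2 + A2 * C1 ^ 2) * (M * N + A1 * A2 * C3 ^ 2) := by
    have hI1 : (A1 * C2 ^ 2 + A2 * C1 ^ 2) * (M * N + A1 * A2 * C3 ^ 2)
        = (M * A2 + N * C2 ^ 2) * (M * A1 + N * C1 ^ 2)
          - (C1 * C2) * ((N ^ 2 + A1 * A2 * A3) * (C1 * C2)) := by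
      linear_combination (-(A1 * A2)) * he2
    rw [hI1]
    exact dvd_sub (mul_dvd_mul hP2' hP1') (dvd_mul_right _ _)
  -- Bezout
  set m1 : ℤ := A1 * C2 ^ 2 + A2 * C1 ^ 2 with hm1def
  have hbez := Int.gcd_eq_gcd_ab m1 A3
  have hdG : C1 * C2 ∣ (Int.gcd m1 A3 : ℤ) * (M * N + A1 * A2 * C3 ^ 2) := by
    have : (Int.gcd m1 A3 : ℤ) * (M * N + A1 * A2 * C3 ^ 2)
        = (m1 * (M * N + A1 * A2 * C3 ^ 2)) * Int.gcdA m1 A3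
          + (A3 * (M * N + A1 * A2 * C3 ^ 2)) * Int.gcdB m1 A3 := by
      rw [hbez]; ring
    rw [this]
    exact dvd_add (hd1.mul_right _) (hd2.mul_right _)
  -- coprimality of the gcd with C1*C2
  have hco : IsCoprime ((Int.gcd m1 A3 : ℤ)) (C1 * C2) := by
    rw [Int.isCoprime_iff_gcd_eq_one]
    by_contra hne
    set g : ℕ := Int.gcd ((Int.gcd m1 A3 : ℤ)) (C1 * C2) with hgdef
    have hp : (g.minFac).Prime := Nat.minFac_prime hne
    set p : ℕ := g.minFac with hpdef
    have hpg : (p : ℤ) ∣ (g : ℤ) := Int.natCast_dvd_natCast.mpr (Nat.minFac_dvd g)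
    have hpm1 : (p : ℤ) ∣ m1 := hpg.trans ((Int.gcd_dvd_left _ _).trans (Int.gcd_dvd_left _ _))
    have hpA3 : (p : ℤ) ∣ A3 := hpg.trans ((Int.gcd_dvd_left _ _).trans (Int.gcd_dvd_right _ _))
    have hpC12 : (p : ℤ) ∣ C1 * C2 := hpg.trans (Int.gcd_dvd_right _ _)
    have hpp : Prime (p : ℤ) := Nat.prime_iff_prime_int.mp hp
    have hco1 : IsCoprime A1 C1 := Int.isCoprime_iff_gcd_eq_one.mpr hAC1
    have hco2 : IsCoprime A2 C2 := Int.isCoprime_iff_gcd_eq_one.mpr hAC2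
    have hco3 : IsCoprime A3 C3 := Int.isCoprime_iff_gcd_eq_one.mpr hAC3
    -- shared-prime impossibility
    have hshared : ¬((p : ℤ) ∣ C1 ∧ (p : ℤ) ∣ C2) := by
      rintro ⟨h1, h2⟩
      have hM2 : (p : ℤ) ∣ M ^ 2 := by
        rw [he2]
        exact dvd_add (dvd_add (((dvd_pow h2 two_ne_zero).mul_left A1).mul_right _)
          (((dvd_pow h1 two_ne_zero).mul_left A2).mul_right _))
          (((dvd_pow h1 two_ne_zero).mul_left A3).mul_right _)
      have hM : (p : ℤ) ∣ M := hpp.dvd_of_dvd_pow hM2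
      have hAAC : (p : ℤ) ∣ A1 * A2 * C3 ^ 2 := by
        have heq : A1 * A2 * C3 ^ 2 = (C1 * C2 * C3) ^ 2 * a₄ - 2 * (M * N)
            - A1 * A3 * C2 ^ 2 - A2 * A3 * C1 ^ 2 := by linear_combination he1
        rw [heq]
        refine dvd_sub (dvd_sub (dvd_sub ?_ ?_) ?_) ?_
        · exact (dvd_pow ((h1.mul_right C2).mul_right C3) two_ne_zero).mul_right a₄
        · exact (hM.mul_right N).mul_left 2
        · exact (dvd_pow h2 two_ne_zero).mul_left (A1 * A3)
        · exact (dvd_pow h1 two_ne_zero).mul_left (A2 * A3)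
      rcases hpp.dvd_mul.mp hAAC with h | h
      · rcases hpp.dvd_mul.mp h with h' | h'
        · exact hpp.not_unit (hco1.isUnit_of_dvd' h' h1)
        · exact hpp.not_unit (hco2.isUnit_of_dvd' h' h2)
      · have : (p : ℤ) ∣ C3 := hpp.dvd_of_dvd_pow h
        exact hpp.not_unit (hco3.isUnit_of_dvd' hpA3 this)
    rcases hpp.dvd_mul.mp hpC12 with h1 | h2
    · by_cases h2 : (p : ℤ) ∣ C2
      · exact hshared ⟨h1, h2⟩
      · have : (p : ℤ) ∣ A1 * C2 ^ 2 := by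
          have : A1 * C2 ^ 2 = m1 - A2 * C1 ^ 2 := by rw [hm1def]; ring
          rw [this]
          exact dvd_sub hpm1 ((dvd_pow h1 two_ne_zero).mul_left A2)
        rcases hpp.dvd_mul.mp this with h' | h'
        · exact hpp.not_unit (hco1.isUnit_of_dvd' h' h1)
        · exact h2 (hpp.dvd_of_dvd_pow h')
    · by_cases h1 : (p : ℤ) ∣ C1
      · exact hshared ⟨h1, h2⟩
      · have : (p : ℤ) ∣ A2 * C1 ^ 2 := by
          have : A2 * C1 ^ 2 = m1 - A1 * C2 ^ 2 := by rw [hm1def]; ring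
          rw [this]
          exact dvd_sub hpm1 ((dvd_pow h2 two_ne_zero).mul_left A1)
        rcases hpp.dvd_mul.mp this with h' | h'
        · exact hpp.not_unit (hco2.isUnit_of_dvd' h' h2)
        · exact h1 (hpp.dvd_of_dvd_pow h')
  exact hco.symm.dvd_of_dvd_mul_left hdG



theorem auxKey (a₄ a₆ u v M N Ai Aj Ak Bi Bj Bk Ci Cj Ck : ℤ)
    (hCi : Ci ≠ 0) (hCj : Cj ≠ 0) (hCk : Ck ≠ 0)
    (hACi : Int.gcd Ai Ci = 1) (hACj : Int.gcd Aj Cj = 1) (hACk : Int.gcd Ak Ck = 1)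
    (hBi : Bi ^ 2 = Ai ^ 3 + a₄ * Ai * Ci ^ 4 + a₆ * Ci ^ 6)
    (hBj : Bj ^ 2 = Aj ^ 3 + a₄ * Aj * Cj ^ 4 + a₆ * Cj ^ 6)
    (hBk : Bk ^ 2 = Ak ^ 3 + a₄ * Ak * Ck ^ 4 + a₆ * Ck ^ 6)
    (he0 : N ^ 2 = Ai * Aj * Ak + (Ci * Cj * Ck) ^ 2 * a₆)
    (he1 : 2 * (M * N) = (Ci * Cj * Ck) ^ 2 * a₄ - (Ai * Aj * Ck ^ 2 + Ai * Ak * Cj ^ 2 + Aj * Ak * Ci ^ 2))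
    (he2 : M ^ 2 = Ai * Cj ^ 2 * Ck ^ 2 + Aj * Ci ^ 2 * Ck ^ 2 + Ak * Ci ^ 2 * Cj ^ 2)
    (ai aj ak b gi gj gk μj μk lj lk Qj Qk : ℤ)
    (hai : ai = Ai * v + Ci ^ 2 * u) (haj : aj = Aj * v + Cj ^ 2 * u)
    (hak : ak = Ak * v + Ck ^ 2 * u) (hb : b = N * v - M * u)
    (hgi : gi = Int.gcd Ci v) (hgj : gj = Int.gcd Cj v) (hgk : gk = Int.gcd Ck v)
    (hμj : Cj ^ 3 * μj + v * aj * lj = gj ^ 2)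
    (hμk : Ck ^ 3 * μk + v * ak * lk = gk ^ 2)
    (hQj : Qj = b * v * lj - M * Cj * μj)
    (hQk : Qk = b * v * lk - M * Ck * μk) :
    Ci * Cj * Ck * (gi * gj * gk) ∣ v * Qj * Qk - ai * gj ^ 2 * gk ^ 2 := by
  have hgiv : gi ∣ v := by rw [hgi]; exact Int.gcd_dvd_right _ _
  have hgjv : gj ∣ v := by rw [hgj]; exact Int.gcd_dvd_right _ _
  have hgkv : gk ∣ v := by rw [hgk]; exact Int.gcd_dvd_right _ _
  have hgiC : gi ∣ Ci := by rw [hgi]; exact Int.gcd_dvd_left _ _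
  have hgjC : gj ∣ Cj := by rw [hgj]; exact Int.gcd_dvd_left _ _
  have hgkC : gk ∣ Ck := by rw [hgk]; exact Int.gcd_dvd_left _ _
  have hT1 : Ci * Cj ∣ M * N + Ai * Aj * Ck ^ 2 :=
    auxT a₄ a₆ M N Ai Aj Ak Bi Bj Bk Ci Cj Ck hCi hCj hCk hACi hACj hACk hBi hBj hBk he0 he1 he2
  have hT2 : Ci * Ck ∣ M * N + Ai * Ak * Cj ^ 2 :=
    auxT a₄ a₆ M N Ai Ak Aj Bi Bk Bj Ci Ck Cj hCi hCk hCj hACi hACk hACj hBi hBk hBj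
      (by linear_combination he0) (by linear_combination he1) (by linear_combination he2)
  obtain ⟨c1, hc1⟩ := hT1
  obtain ⟨c2, hc2⟩ := hT2
  subst hQj hQk hb hai haj hak
  have ht1 : Ci * Cj * Ck * (gi * gj * gk) ∣
      ((Ci * Cj * Ck) * ((v * v) * (Ci * Cj * Ck))) * ((lj * lk) * (u ^ 3 + a₄ * u * v ^ 2 - a₆ * v ^ 3)) :=
    (mul_dvd_mul_left (Ci * Cj * Ck)
      (mul_dvd_mul (mul_dvd_mul hgiv hgjv) (hgkC.mul_left (Ci * Cj)))).mul_right _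
  have ht2a : Ci * Cj * Ck * (gi * gj * gk) ∣
      ((Ci * Cj * Ck) * ((Ci * v) * Ck)) * ((μj * μk) * (Aj * Ck)) :=
    (mul_dvd_mul_left (Ci * Cj * Ck)
      (mul_dvd_mul (mul_dvd_mul hgiC hgjv) hgkC)).mul_right _
  have ht2b : Ci * Cj * Ck * (gi * gj * gk) ∣
      ((Ci * Cj * Ck) * ((Ci * Cj) * v)) * ((μj * μk) * (Ak * Cj)) :=
    (mul_dvd_mul_left (Ci * Cj * Ck)
      (mul_dvd_mul (mul_dvd_mul hgiC hgjC) hgkv)).mul_right _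
  have ht2c : Ci * Cj * Ck * (gi * gj * gk) ∣
      ((Ci * Cj * Ck) * ((Ci * Cj) * Ck)) * ((μj * μk) * (u * (Cj * Ck))) :=
    (mul_dvd_mul_left (Ci * Cj * Ck)
      (mul_dvd_mul (mul_dvd_mul hgiC hgjC) hgkC)).mul_right _
  have ht3a : Ci * Cj * Ck * (gi * gj * gk) ∣
      ((Ci * Cj * Ck) * ((v * v) * v)) * ((lj * μk) * c1) :=
    (mul_dvd_mul_left (Ci * Cj * Ck)
      (mul_dvd_mul (mul_dvd_mul hgiv hgjv) hgkv)).mul_right _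
  have ht3b : Ci * Cj * Ck * (gi * gj * gk) ∣
      ((Ci * Cj * Ck) * ((Ci * Cj) * v)) * ((u * (u * Ck ^ 2 - v * Ak)) * (lj * μk)) :=
    (mul_dvd_mul_left (Ci * Cj * Ck)
      (mul_dvd_mul (mul_dvd_mul hgiC hgjC) hgkv)).mul_right _
  have ht4a : Ci * Cj * Ck * (gi * gj * gk) ∣
      ((Ci * Cj * Ck) * ((v * v) * v)) * ((lk * μj) * c2) :=
    (mul_dvd_mul_left (Ci * Cj * Ck)
      (mul_dvd_mul (mul_dvd_mul hgiv hgjv) hgkv)).mul_right _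
  have ht4b : Ci * Cj * Ck * (gi * gj * gk) ∣
      ((Ci * Cj * Ck) * ((Ci * v) * Ck)) * ((u * (u * Cj ^ 2 - v * Aj)) * (lk * μj)) :=
    (mul_dvd_mul_left (Ci * Cj * Ck)
      (mul_dvd_mul (mul_dvd_mul hgiC hgjv) hgkC)).mul_right _
  have hsum : v * ((N * v - M * u) * v * lj - M * Cj * μj) * ((N * v - M * u) * v * lk - M * Ck * μk)
      - (Ai * v + Ci ^ 2 * u) * gj ^ 2 * gk ^ 2
      = -(((Ci * Cj * Ck) * ((v * v) * (Ci * Cj * Ck))) * ((lj * lk) * (u ^ 3 + a₄ * u * v ^ 2 - a₆ * v ^ 3)))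
        + (((Ci * Cj * Ck) * ((Ci * v) * Ck)) * ((μj * μk) * (Aj * Ck))
          + ((Ci * Cj * Ck) * ((Ci * Cj) * v)) * ((μj * μk) * (Ak * Cj))
          - ((Ci * Cj * Ck) * ((Ci * Cj) * Ck)) * ((μj * μk) * (u * (Cj * Ck))))
        - (((Ci * Cj * Ck) * ((v * v) * v)) * ((lj * μk) * c1)
          + ((Ci * Cj * Ck) * ((Ci * Cj) * v)) * ((u * (u * Ck ^ 2 - v * Ak)) * (lj * μk)))
        - (((Ci * Cj * Ck) * ((v * v) * v)) * ((lk * μj) * c2)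
          + ((Ci * Cj * Ck) * ((Ci * v) * Ck)) * ((u * (u * Cj ^ 2 - v * Aj)) * (lk * μj))) := by
    linear_combination (v ^ 5 * lj * lk) * he0 - (u * v ^ 4 * lj * lk) * he1
      + (u ^ 2 * v ^ 3 * lj * lk + v * Cj * Ck * μj * μk + u * v ^ 2 * lj * Ck * μk
        + u * v ^ 2 * lk * Cj * μj) * he2
      - (v ^ 3 * lj * Ck * μk) * hc1 - (v ^ 3 * lk * Cj * μj) * hc2
      + ((Ai * v + Ci ^ 2 * u) * (Ck ^ 3 * μk + v * (Ak * v + Ck ^ 2 * u) * lk)) * hμj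
      + ((Ai * v + Ci ^ 2 * u) * gj ^ 2) * hμk
  rw [hsum]
  exact dvd_sub (dvd_sub (dvd_add (dvd_neg.mpr ht1) (dvd_sub (dvd_add ht2a ht2b) ht2c))
    (dvd_add ht3a ht3b)) (dvd_add ht4a ht4b)


open Polynomial in
theorem stmt_10 (a₄ a₆ u v : ℤ) (hu : 0 < u) (hv : 0 < v) (hvsf : Squarefree v)
    (huv : Int.gcd u v = 1)
    (A₁ A₂ A₃ B₁ B₂ B₃ C₁ C₂ C₃ : ℤ)
    (hC₁ : 1 ≤ C₁) (hC₂ : 1 ≤ C₂) (hC₃ : 1 ≤ C₃)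
    (hAC₁ : Int.gcd A₁ C₁ = 1) (hAC₂ : Int.gcd A₂ C₂ = 1) (hAC₃ : Int.gcd A₃ C₃ = 1)
    (hBC₁ : Int.gcd B₁ C₁ = 1) (hBC₂ : Int.gcd B₂ C₂ = 1) (hBC₃ : Int.gcd B₃ C₃ = 1)
    (hB₁ : B₁ ^ 2 = A₁ ^ 3 + a₄ * A₁ * C₁ ^ 4 + a₆ * C₁ ^ 6)
    (hB₂ : B₂ ^ 2 = A₂ ^ 3 + a₄ * A₂ * C₂ ^ 4 + a₆ * C₂ ^ 6)
    (hB₃ : B₃ ^ 2 = A₃ ^ 3 + a₄ * A₃ * C₃ ^ 4 + a₆ * C₃ ^ 6)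
    (M N Cp : ℤ) (hCp : Cp = C₁ * C₂ * C₃)
    (hline : (C (C₁ ^ 2) * X - C A₁) * (C (C₂ ^ 2) * X - C A₂) * (C (C₃ ^ 2) * X - C A₃)
      = C (Cp ^ 2) * (X ^ 3 + C a₄ * X + C a₆) - (C M * X + C N) ^ 2)
    (a₁ a₂ a₃ b g₁ g₂ g₃ : ℤ)
    (ha₁ : a₁ = A₁ * v + C₁ ^ 2 * u) (ha₂ : a₂ = A₂ * v + C₂ ^ 2 * u)
    (ha₃ : a₃ = A₃ * v + C₃ ^ 2 * u) (hb : b = N * v - M * u)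
    (hg₁ : g₁ = Int.gcd C₁ v) (hg₂ : g₂ = Int.gcd C₂ v) (hg₃ : g₃ = Int.gcd C₃ v)
    (μ₁ μ₂ μ₃ l₁ l₂ l₃ : ℤ)
    (hμ₁ : C₁ ^ 3 * μ₁ + v * a₁ * l₁ = g₁ ^ 2)
    (hμ₂ : C₂ ^ 3 * μ₂ + v * a₂ * l₂ = g₂ ^ 2)
    (hμ₃ : C₃ ^ 3 * μ₃ + v * a₃ * l₃ = g₃ ^ 2)
    (Q₁ Q₂ Q₃ : ℤ)
    (hQ₁ : Q₁ = b * v * l₁ - M * C₁ * μ₁)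
    (hQ₂ : Q₂ = b * v * l₂ - M * C₂ * μ₂)
    (hQ₃ : Q₃ = b * v * l₃ - M * C₃ * μ₃) :
    Cp * (g₁ * g₂ * g₃) ∣ v * Q₂ * Q₃ - a₁ * g₂ ^ 2 * g₃ ^ 2 ∧
    Cp * (g₁ * g₂ * g₃) ∣ v * Q₁ * Q₃ - a₂ * g₁ ^ 2 * g₃ ^ 2 ∧
    Cp * (g₁ * g₂ * g₃) ∣ v * Q₁ * Q₂ - a₃ * g₁ ^ 2 * g₂ ^ 2 := by
  have hC₁' : C₁ ≠ 0 := by positivity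
  have hC₂' : C₂ ≠ 0 := by positivity
  have hC₃' : C₃ ≠ 0 := by positivity
  have h0 := congrArg (Polynomial.eval (0:ℤ)) hline
  have h1 := congrArg (Polynomial.eval (1:ℤ)) hline
  have hm1 := congrArg (Polynomial.eval (-1:ℤ)) hline
  simp only [Polynomial.eval_mul, Polynomial.eval_sub, Polynomial.eval_add, Polynomial.eval_pow,
    Polynomial.eval_C, Polynomial.eval_X] at h0 h1 hm1
  have he0 : N ^ 2 = A₁ * A₂ * A₃ + (C₁ * C₂ * C₃) ^ 2 * a₆ := by
    linear_combination h0 + a₆ * (Cp + C₁ * C₂ * C₃) * hCp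
  have he1 : 2 * (M * N) = (C₁ * C₂ * C₃) ^ 2 * a₄
      - (A₁ * A₂ * C₃ ^ 2 + A₁ * A₃ * C₂ ^ 2 + A₂ * A₃ * C₁ ^ 2) := by
    have h : 2 * (2 * (M * N)) = 2 * ((C₁ * C₂ * C₃) ^ 2 * a₄
        - (A₁ * A₂ * C₃ ^ 2 + A₁ * A₃ * C₂ ^ 2 + A₂ * A₃ * C₁ ^ 2)) := by
      linear_combination h1 - hm1 + ((2 + 2 * a₄) * (Cp + C₁ * C₂ * C₃)) * hCp
    exact mul_left_cancel₀ (by norm_num : (2:ℤ) ≠ 0) h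
  have he2 : M ^ 2 = A₁ * C₂ ^ 2 * C₃ ^ 2 + A₂ * C₁ ^ 2 * C₃ ^ 2 + A₃ * C₁ ^ 2 * C₂ ^ 2 := by
    have h : 2 * (M ^ 2) = 2 * (A₁ * C₂ ^ 2 * C₃ ^ 2 + A₂ * C₁ ^ 2 * C₃ ^ 2 + A₃ * C₁ ^ 2 * C₂ ^ 2) := by
      linear_combination h1 + hm1 - 2 * h0
    exact mul_left_cancel₀ (by norm_num : (2:ℤ) ≠ 0) h
  refine ⟨?_, ?_, ?_⟩
  · have h := auxKey a₄ a₆ u v M N A₁ A₂ A₃ B₁ B₂ B₃ C₁ C₂ C₃ hC₁' hC₂' hC₃'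
      hAC₁ hAC₂ hAC₃ hB₁ hB₂ hB₃ he0 he1 he2
      a₁ a₂ a₃ b g₁ g₂ g₃ μ₂ μ₃ l₂ l₃ Q₂ Q₃ ha₁ ha₂ ha₃ hb hg₁ hg₂ hg₃ hμ₂ hμ₃ hQ₂ hQ₃
    have heq : Cp * (g₁ * g₂ * g₃) = C₁ * C₂ * C₃ * (g₁ * g₂ * g₃) := by rw [hCp]
    rw [heq]; exact h
  · have h := auxKey a₄ a₆ u v M N A₂ A₁ A₃ B₂ B₁ B₃ C₂ C₁ C₃ hC₂' hC₁' hC₃'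
      hAC₂ hAC₁ hAC₃ hB₂ hB₁ hB₃ (by linear_combination he0) (by linear_combination he1)
      (by linear_combination he2)
      a₂ a₁ a₃ b g₂ g₁ g₃ μ₁ μ₃ l₁ l₃ Q₁ Q₃ ha₂ ha₁ ha₃ hb hg₂ hg₁ hg₃ hμ₁ hμ₃ hQ₁ hQ₃
    have heq : Cp * (g₁ * g₂ * g₃) = C₂ * C₁ * C₃ * (g₂ * g₁ * g₃) := by rw [hCp]; ring
    rw [heq]; exact h
  · have h := auxKey a₄ a₆ u v M N A₃ A₁ A₂ B₃ B₁ B₂ C₃ C₁ C₂ hC₃' hC₁' hC₂'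
      hAC₃ hAC₁ hAC₂ hB₃ hB₁ hB₂ (by linear_combination he0) (by linear_combination he1)
      (by linear_combination he2)
      a₃ a₁ a₂ b g₃ g₁ g₂ μ₁ μ₂ l₁ l₂ Q₁ Q₂ ha₃ ha₁ ha₂ hb hg₃ hg₁ hg₂ hμ₁ hμ₂ hQ₁ hQ₂
    have heq : Cp * (g₁ * g₂ * g₃) = C₃ * C₁ * C₂ * (g₃ * g₁ * g₂) := by rw [hCp]; ring
    rw [heq]; exact h
end

section
/- Let u, v be positive integers with v squarefree, let A, C be integers with C ≥ 1, let a := Av + C²u be a positive integer, let g := gcd(C, v), and let d be a positive integer. Suppose there exist coprime integers α, γ such that v·a = g²(α² + d·γ²). Then either v divides C, or v·a ≥ g²·d. -/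
/-- Arithmetic core of part (2) of Theorem 2.4: if `v·a = g²(α² + dγ²)` with
`gcd(α, γ) = 1`, then `v ∣ C` or `v·a ≥ g²·d`. -/
theorem stmt_12 (u v A C : ℤ) (hu : 0 < u) (hv : 0 < v) (hvsf : Squarefree v)
    (hC : 1 ≤ C) (a g d : ℤ) (ha : a = A * v + C ^ 2 * u) (ha0 : 0 < a)
    (hg : g = Int.gcd C v) (hd : 0 < d)
    (α γ : ℤ) (hcop : IsCoprime α γ) (hrep : v * a = g ^ 2 * (α ^ 2 + d * γ ^ 2)) :
    v ∣ C ∨ g ^ 2 * d ≤ v * a := by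
  rcases eq_or_ne γ 0 with hγ | hγ
  · -- γ = 0 : α is a unit, so v*a = g², hence v ∣ g² and v ∣ g, so v = g ∣ C
    left
    subst hγ
    have hα : α ^ 2 = 1 := by
      have := isCoprime_zero_right.mp hcop
      rcases Int.isUnit_iff.mp this with h | h <;> simp [h]
    have hva : v * a = g ^ 2 := by rw [hrep, hα]; ring
    have hvg2 : v ∣ g ^ 2 := ⟨a, hva.symm⟩
    have hvg : v ∣ g := (hvsf.dvd_pow_iff_dvd two_ne_zero).mp hvg2
    have hgv : g ∣ v := by rw [hg]; exact Int.gcd_dvd_right _ _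
    have hgC : g ∣ C := by rw [hg]; exact Int.gcd_dvd_left _ _
    have hg0 : 0 ≤ g := by rw [hg]; exact Int.natCast_nonneg _
    have hvgeq : v = g := Int.dvd_antisymm hv.le hg0 hvg hgv
    rw [hvgeq]; exact hgC
  · right
    have h1 : 1 ≤ γ ^ 2 := by
      have := sq_abs γ ▸ pow_pos (abs_pos.mpr hγ) 2
      omega
    have h2 : d ≤ α ^ 2 + d * γ ^ 2 := by nlinarith [sq_nonneg α]
    have h3 : g ^ 2 * d ≤ g ^ 2 * (α ^ 2 + d * γ ^ 2) :=
      mul_le_mul_of_nonneg_left h2 (sq_nonneg g)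
    linarith [hrep]
end

section
/- Let ε' > 0, let n, k₁, k₂, k₃ be nonnegative real numbers, and set C₀ := 1 + k₁ + k₂ + k₃. If x and y are real numbers with x, y ≥ 1 satisfying y(x³ + k₁x²y + k₂xy² + k₃y³) ≥ (y³(x + (n+1)y))^(1+ε'), then either x ≤ y and y^(4ε') ≤ C₀/(n+1), or x > y and y^(1+ε') ≤ (C₀/(n+1))^(1/3)·x. -/
/-- Key dichotomy in the proof of Lemma 4.2 (failure of upper bound-suitability):
if `y(x³ + k₁x²y + k₂xy² + k₃y³) ≥ (y³(x + (n+1)y))^(1+ε')` with `x, y ≥ 1`, then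
either `x ≤ y` and `y^(4ε') ≤ C₀/(n+1)`, or `x > y` and
`y^(1+ε') ≤ (C₀/(n+1))^(1/3)·x`, where `C₀ = 1 + k₁ + k₂ + k₃`. -/
theorem stmt_14 (ε' n k₁ k₂ k₃ : ℝ) (hε' : 0 < ε') (hn : 0 ≤ n)
    (hk₁ : 0 ≤ k₁) (hk₂ : 0 ≤ k₂) (hk₃ : 0 ≤ k₃)
    (C₀ : ℝ) (hC₀ : C₀ = 1 + k₁ + k₂ + k₃)
    (x y : ℝ) (hx : 1 ≤ x) (hy : 1 ≤ y)
    (h : (y ^ 3 * (x + (n + 1) * y)) ^ (1 + ε')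
      ≤ y * (x ^ 3 + k₁ * x ^ 2 * y + k₂ * x * y ^ 2 + k₃ * y ^ 3)) :
    (x ≤ y ∧ y ^ (4 * ε') ≤ C₀ / (n + 1)) ∨
    (y < x ∧ y ^ (1 + ε') ≤ (C₀ / (n + 1)) ^ ((1 : ℝ) / 3) * x) := by
  have hy0 : (0:ℝ) < y := lt_of_lt_of_le one_pos hy
  have hx0 : (0:ℝ) < x := lt_of_lt_of_le one_pos hx
  have hn1 : (0:ℝ) < n + 1 := by linarith
  have hC : (0:ℝ) < C₀ := by rw [hC₀]; linarith
  by_cases hxy : x ≤ y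
  · left
    refine ⟨hxy, ?_⟩
    -- RHS ≤ C₀ * y^4
    have hx3 : x ^ 3 ≤ y ^ 3 := pow_le_pow_left₀ (by linarith) hxy 3
    have hx2 : x ^ 2 ≤ y ^ 2 := pow_le_pow_left₀ (by linarith) hxy 2
    have h3 : y * (x ^ 3 + k₁ * x ^ 2 * y + k₂ * x * y ^ 2 + k₃ * y ^ 3) ≤ C₀ * y ^ 4 := by
      rw [hC₀]; nlinarith [mul_le_mul_of_nonneg_right hx3 hy0.le,
        mul_le_mul_of_nonneg_right hx2 (sq_nonneg y),
        mul_le_mul_of_nonneg_right hxy (pow_pos hy0 3).le]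
    -- base inequality
    have h1 : ((n+1) * y ^ 4 : ℝ) ≤ y ^ 3 * (x + (n + 1) * y) := by nlinarith
    have h2 : ((n+1) * y ^ 4) ^ (1+ε') ≤ (y ^ 3 * (x + (n + 1) * y)) ^ (1+ε') :=
      Real.rpow_le_rpow (by positivity) h1 (by linarith)
    have h4 : (n+1) * y ^ ((4:ℝ) * (1+ε')) ≤ ((n+1) * y ^ 4) ^ (1+ε') := by
      rw [Real.mul_rpow hn1.le (by positivity)]
      have hnp : (n+1) ≤ (n+1) ^ (1+ε') := by
        calc (n+1) = (n+1) ^ (1:ℝ) := (Real.rpow_one _).symm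
        _ ≤ (n+1) ^ (1+ε') := Real.rpow_le_rpow_of_exponent_le (by linarith) (by linarith)
      have hyp : (y ^ (4:ℕ) : ℝ) ^ (1+ε') = y ^ ((4:ℝ) * (1+ε')) := by
        rw [← Real.rpow_natCast y 4, ← Real.rpow_mul hy0.le]; norm_num
      rw [hyp]
      exact mul_le_mul_of_nonneg_right hnp (by positivity)
    have key : (n+1) * (y ^ 4 * y ^ (4*ε')) ≤ C₀ * y ^ 4 := by
      have : (4:ℝ) * (1+ε') = (4:ℕ) + 4*ε' := by push_cast; ring
      have he : y ^ ((4:ℝ) * (1+ε')) = y ^ 4 * y ^ (4*ε') := by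
        rw [this, Real.rpow_add hy0, Real.rpow_natCast]
      rw [← he]
      calc (n+1) * y ^ ((4:ℝ)*(1+ε')) ≤ ((n+1) * y ^ 4) ^ (1+ε') := h4
        _ ≤ (y ^ 3 * (x + (n + 1) * y)) ^ (1+ε') := h2
        _ ≤ y * (x ^ 3 + k₁ * x ^ 2 * y + k₂ * x * y ^ 2 + k₃ * y ^ 3) := h
        _ ≤ C₀ * y ^ 4 := h3
    rw [le_div_iff₀ hn1]
    have hy4 : (0:ℝ) < y ^ 4 := pow_pos hy0 4
    nlinarith [key]
  · right
    push_neg at hxy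
    refine ⟨hxy, ?_⟩
    set B := y ^ 3 * (x + (n + 1) * y) with hB
    have hB0 : 0 < B := by positivity
    have hBy : y ^ 3 ≤ B := by
      have : (1:ℝ) ≤ x + (n+1)*y := by nlinarith
      nlinarith [pow_pos hy0 3]
    have hBn : (n+1) * y ^ 4 ≤ B := by rw [hB]; nlinarith [mul_pos (pow_pos hy0 3) hx0]
    -- RHS ≤ C₀ * x^3 * y
    have hy3 : y ^ 3 ≤ x ^ 3 := pow_le_pow_left₀ hy0.le hxy.le 3
    have hy2 : y ^ 2 ≤ x ^ 2 := pow_le_pow_left₀ hy0.le hxy.le 2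
    have h3 : y * (x ^ 3 + k₁ * x ^ 2 * y + k₂ * x * y ^ 2 + k₃ * y ^ 3) ≤ C₀ * x ^ 3 * y := by
      rw [hC₀]; nlinarith [mul_le_mul_of_nonneg_left hy2 (mul_nonneg hk₂ hx0.le),
        mul_le_mul_of_nonneg_left hy3 hk₃,
        mul_le_mul_of_nonneg_right hxy.le (mul_nonneg hk₁ (mul_nonneg (sq_nonneg x) hy0.le))]
    have hBpow : B * B ^ ε' ≤ B ^ (1+ε') := by
      rw [Real.rpow_add hB0, Real.rpow_one]
    have hB3 : y ^ ((3:ℝ)*ε') ≤ B ^ ε' := by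
      have : (y ^ (3:ℕ) : ℝ) ^ ε' ≤ B ^ ε' := Real.rpow_le_rpow (by positivity) hBy hε'.le
      rwa [← Real.rpow_natCast y 3, ← Real.rpow_mul hy0.le] at this
    have key : (n+1) * y ^ 4 * y ^ ((3:ℝ)*ε') ≤ C₀ * x ^ 3 * y := by
      calc (n+1) * y ^ 4 * y ^ ((3:ℝ)*ε') ≤ B * B ^ ε' :=
            mul_le_mul hBn hB3 (by positivity) hB0.le
        _ ≤ B ^ (1+ε') := hBpow
        _ ≤ y * (x ^ 3 + k₁ * x ^ 2 * y + k₂ * x * y ^ 2 + k₃ * y ^ 3) := h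
        _ ≤ C₀ * x ^ 3 * y := h3
    have key2 : (n+1) * (y ^ 3 * y ^ ((3:ℝ)*ε')) ≤ C₀ * x ^ 3 := by
      have h5 : ((n+1) * (y ^ 3 * y ^ ((3:ℝ)*ε'))) * y ≤ (C₀ * x ^ 3) * y := by
        calc ((n+1) * (y ^ 3 * y ^ ((3:ℝ)*ε'))) * y = (n+1) * y ^ 4 * y ^ ((3:ℝ)*ε') := by ring
          _ ≤ C₀ * x ^ 3 * y := key
      exact le_of_mul_le_mul_right h5 hy0
    -- cube both sides of the goal
    have hcube : (y ^ (1+ε')) ^ (3:ℕ) ≤ ((C₀/(n+1)) ^ ((1:ℝ)/3) * x) ^ (3:ℕ) := by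
      have hl : (y ^ (1+ε')) ^ (3:ℕ) = y ^ 3 * y ^ ((3:ℝ)*ε') := by
        rw [← Real.rpow_natCast (y ^ (1+ε')) 3, ← Real.rpow_mul hy0.le]
        have : (1+ε') * ((3:ℕ):ℝ) = (3:ℕ) + 3*ε' := by push_cast; ring
        rw [this, Real.rpow_add hy0, Real.rpow_natCast]
      have hr : ((C₀/(n+1)) ^ ((1:ℝ)/3) * x) ^ (3:ℕ) = C₀/(n+1) * x ^ 3 := by
        rw [mul_pow, ← Real.rpow_natCast ((C₀/(n+1)) ^ ((1:ℝ)/3)) 3,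
          ← Real.rpow_mul (by positivity)]
        norm_num
      rw [hl, hr]
      rw [div_mul_eq_mul_div, le_div_iff₀ hn1]
      calc (y ^ 3 * y ^ ((3:ℝ)*ε')) * (n+1) = (n+1) * (y ^ 3 * y ^ ((3:ℝ)*ε')) := by ring
        _ ≤ C₀ * x ^ 3 := key2
    exact le_of_pow_le_pow_left₀ (by norm_num) (by positivity) hcube
end

section
/- Let a₄, a₆ be integers, fix 0 < ε < 1/2 and set ε' := ε/(1−ε), and fix real constants K > 0 and A₀ ≥ 0. For a positive integer n and positive integers x, y, set G_n(x, y) := y((x+ny)³ + a₄(x+ny)y² − a₆y³), and say that (x, y) fails at level n if at least one of the following does not hold: (1) y ≥ 2 and G_n(x, y) > y(x + (n + A₀)y); (2) G_n(x, y) > K·(y(x + (n+1)y))^(1+ε'); (3) G_n(x, y) < (y³(x + (n+1)y))^(1+ε'). Then there exists N > 0 such that for every integer n > N: (a) for all positive integers x, y one has G_n(x, y) > 0 and 3(x+ny)² + a₄y² > 0; and (b) there exists a constant c > 0 such that for all real Y ≥ 2, the number of integer pairs (x, y) with 0 < x, y < Y that fail at level n is at most c·Y^(2−ε). -/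
set_option maxHeartbeats 2000000 in
lemma stmt15_core (a b K A₀ ε' m W X : ℝ) (hε'0 : 0 < ε') (hε'1 : ε' ≤ 1)
    (hK : 0 < K) (hA₀ : 0 ≤ A₀)
    (hm : 8*K + A₀ + 2*|a| + 2*|b| + 10 ≤ m)
    (hX : 1 ≤ X) (hW : 2 ≤ W)
    (hWe : 16*m ≤ W^ε') (hXW : X ≤ W^(1+ε')) :
    W*(X + (m+A₀)*W) < W*((X+m*W)^3 + a*(X+m*W)*W^2 - b*W^3) ∧
    K*(W*(X+(m+1)*W))^(1+ε') < W*((X+m*W)^3 + a*(X+m*W)*W^2 - b*W^3) ∧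
    W*((X+m*W)^3 + a*(X+m*W)*W^2 - b*W^3) < (W^3*(X+(m+1)*W))^(1+ε') := by
  have hW0 : (0:ℝ) < W := by linarith
  have ha1 : -|a| ≤ a := neg_abs_le a
  have ha2 : a ≤ |a| := le_abs_self a
  have hb1 : -|b| ≤ b := neg_abs_le b
  have hb2 : b ≤ |b| := le_abs_self b
  have ha0 : 0 ≤ |a| := abs_nonneg a
  have hb0 : 0 ≤ |b| := abs_nonneg b
  have hm10 : 10 ≤ m := by nlinarith
  obtain ⟨t, ht_def⟩ : ∃ t, X + m*W = t := ⟨_, rfl⟩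
  have hXt : X + (m+A₀)*W = t + A₀*W := by rw [← ht_def]; ring
  have hXt1 : X + (m+1)*W = t + W := by rw [← ht_def]; ring
  rw [ht_def, hXt, hXt1]
  have ht_mW : m*W ≤ t := by rw [← ht_def]; linarith
  have ht0 : (0:ℝ) < t := by nlinarith
  have htW : W ≤ t := by nlinarith
  have ht20 : 20 ≤ t := by nlinarith
  obtain ⟨g, hg_def⟩ : ∃ g, t^3 + a*t*W^2 - b*W^3 = g := ⟨_, rfl⟩
  rw [hg_def]
  have hm2 : 2*(|a|+|b|) ≤ m^2 := by nlinarith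
  have hsq : (m*W)^2 ≤ t^2 := pow_le_pow_left₀ (by positivity) ht_mW 2
  have hkey : 2*(|a|+|b|)*W^2 ≤ t^2 := by
    nlinarith [mul_le_mul_of_nonneg_right hm2 (sq_nonneg W)]
  have h1 : |a| * (t*W^2) + |b| * W^3 ≤ t^3/2 := by
    nlinarith [mul_le_mul_of_nonneg_left hkey ht0.le,
      mul_le_mul_of_nonneg_right htW (mul_nonneg hb0 (sq_nonneg W))]
  have htW2 : 0 ≤ t*W^2 := by positivity
  have hW3 : 0 ≤ W^3 := by positivity
  have hglb : t^3/2 ≤ g := by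
    rw [← hg_def]
    nlinarith [mul_le_mul_of_nonneg_right ha1 htW2, mul_le_mul_of_nonneg_right hb2 hW3]
  have hgub : g ≤ 2*t^3 := by
    rw [← hg_def]
    nlinarith [mul_le_mul_of_nonneg_right ha2 htW2, mul_le_mul_of_nonneg_right hb1 hW3]
  have hg0 : 0 < g := by nlinarith
  refine ⟨?_, ?_, ?_⟩
  · -- condition (1)
    have hA : A₀*W ≤ m*W := by nlinarith
    have h2 : t + A₀*W < t^3/2 := by nlinarith
    nlinarith
  · -- condition (2)
    have hu0 : 0 ≤ W*(t+W) := by positivity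
    have hule : W*(t+W) ≤ 2*t*W := by nlinarith
    have h2tW1 : (1:ℝ) ≤ 2*t*W := by nlinarith
    have step1 : (W*(t+W))^(1+ε') ≤ (2*t*W)^(1+ε') :=
      Real.rpow_le_rpow hu0 hule (by linarith)
    have step2 : (2*t*W)^(1+ε') ≤ (2*t*W)^(2:ℝ) :=
      Real.rpow_le_rpow_of_exponent_le h2tW1 (by linarith)
    have step3 : (2*t*W)^(2:ℝ) = (2*t*W)^2 := Real.rpow_two _
    have hfin : K*((2*t*W)^2) < W*g := by
      have h8 : 8*K*W < t := by nlinarith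
      nlinarith [mul_pos ht0 ht0, mul_pos hW0 hW0,
        mul_pos (mul_pos ht0 ht0) hW0, mul_pos (mul_pos hW0 hW0) ht0]
    calc K*(W*(t+W))^(1+ε') ≤ K*((2*t*W)^2) := by
          rw [← step3]; exact mul_le_mul_of_nonneg_left (step1.trans step2) hK.le
      _ < W*g := hfin
  · -- condition (3)
    have hWsplit : W^(1+ε') = W * W^ε' := by
      rw [Real.rpow_add hW0, Real.rpow_one]
    have hWe16 : (16:ℝ) ≤ W^ε' := by nlinarith
    have hmWle : m*W ≤ W^(1+ε') := by rw [hWsplit]; nlinarith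
    have ht_le : t ≤ 2*W^(1+ε') := by rw [← ht_def]; linarith
    have hWpow_pos : (0:ℝ) < W^(1+ε') := Real.rpow_pos_of_pos hW0 _
    have hcube : (W^(1+ε'))^(3:ℕ) = W^((1+ε')*3) := by
      rw [← Real.rpow_natCast (W^(1+ε')) 3, ← Real.rpow_mul hW0.le]; norm_num
    have hLHS : W*g ≤ 16 * W^(1+(1+ε')*3) := by
      have h2 : t^3 ≤ 8*(W^(1+ε'))^3 := by
        nlinarith [pow_le_pow_left₀ ht0.le ht_le 3]
      have h3 : W^(1+(1+ε')*3) = W * W^((1+ε')*3) := by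
        rw [Real.rpow_add hW0, Real.rpow_one]
      rw [h3, ← hcube]
      nlinarith [pow_pos hWpow_pos 3]
    have hstep : 16 * W^(1+(1+ε')*3) ≤ W^((4:ℝ)*(1+ε')) := by
      have he : W^((4:ℝ)*(1+ε')) = W^(1+(1+ε')*3) * W^ε' := by
        rw [← Real.rpow_add hW0]; ring_nf
      rw [he]
      have h0 : 0 < W^(1+(1+ε')*3) := Real.rpow_pos_of_pos hW0 _
      nlinarith
    have hW4 : W^((4:ℝ)*(1+ε')) = (W^4)^(1+ε') := by
      rw [← Real.rpow_natCast W 4, ← Real.rpow_mul hW0.le]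
      norm_num
    have hlast : (W^4)^(1+ε') < (W^3*(t+W))^(1+ε') := by
      apply Real.rpow_lt_rpow (by positivity) _ (by linarith)
      nlinarith [pow_pos hW0 3]
    calc W*g ≤ 16 * W^(1+(1+ε')*3) := hLHS
      _ ≤ W^((4:ℝ)*(1+ε')) := hstep
      _ = (W^4)^(1+ε') := hW4
      _ < (W^3*(t+W))^(1+ε') := hlast


set_option maxHeartbeats 2000000 in
lemma stmt15_int (a₄ a₆ : ℤ) (n x y : ℤ) (hx : 1 ≤ x) (hy : 1 ≤ y)
    (hn : |a₄| + |a₆| + 2 ≤ n) :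
    0 < y * ((x + n * y) ^ 3 + a₄ * (x + n * y) * y ^ 2 - a₆ * y ^ 3) ∧
    0 < 3 * (x + n * y) ^ 2 + a₄ * y ^ 2 := by
  have ha1 : -|a₄| ≤ a₄ := neg_abs_le a₄
  have ha2 : a₄ ≤ |a₄| := le_abs_self a₄
  have hb1 : -|a₆| ≤ a₆ := neg_abs_le a₆
  have hb2 : a₆ ≤ |a₆| := le_abs_self a₆
  have ha0 : 0 ≤ |a₄| := abs_nonneg a₄
  have hb0 : 0 ≤ |a₆| := abs_nonneg a₆
  have hn2 : 2 ≤ n := by linarith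
  obtain ⟨s, hs⟩ : ∃ s, x + n*y = s := ⟨_, rfl⟩
  rw [hs]
  have hsy : n*y ≤ s := by rw [← hs]; nlinarith
  have hys : y ≤ s := by nlinarith
  have hs1 : 1 ≤ s := by linarith
  have hny0 : (0:ℤ) ≤ n*y := mul_nonneg (by linarith) (by linarith)
  have hsq : (n*y)^2 ≤ s^2 := by nlinarith [mul_le_mul hsy hsy hny0 (hny0.trans hsy)]
  have hkey : (|a₄| + |a₆| + 2)*y^2 ≤ s^2 := by nlinarith [sq_nonneg y]
  have hys2 : 0 ≤ s*y^2 := by positivity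
  have hy3 : 0 ≤ y^3 := by positivity
  constructor
  · have hinner : 2*(s*y^2) ≤ s^3 + a₄*s*y^2 - a₆*y^3 := by
      nlinarith [mul_le_mul_of_nonneg_right ha1 hys2,
        mul_le_mul_of_nonneg_right hb2 hy3,
        mul_le_mul_of_nonneg_right hys (mul_nonneg hb0 (sq_nonneg y)),
        mul_le_mul_of_nonneg_left hkey (by linarith : (0:ℤ) ≤ s)]
    nlinarith [mul_pos (lt_of_lt_of_le zero_lt_one hs1) (mul_pos (lt_of_lt_of_le zero_lt_one hy) (lt_of_lt_of_le zero_lt_one hy))]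
  · nlinarith [mul_le_mul_of_nonneg_right ha1 (sq_nonneg y), sq_nonneg y]


set_option maxHeartbeats 1000000 in
/-- Lemma 4.2: there is an `N > 0` such that for every `n > N`, the pair `(x+ny, y)`
is map-suitable for all positive `x, y`, and the number of pairs `0 < x, y < Y`
failing kernel-suitability or ε-bound-suitability is `O(Y^(2−ε))`. -/
theorem stmt_15 (a₄ a₆ : ℤ) (ε ε' K A₀ : ℝ) (hε0 : 0 < ε) (hε1 : ε < 1 / 2)
    (hε' : ε' = ε / (1 - ε)) (hK : 0 < K) (hA₀ : 0 ≤ A₀) :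
    ∃ N : ℕ, 0 < N ∧ ∀ n : ℕ, N < n →
      (∀ x y : ℤ, 0 < x → 0 < y →
        0 < y * ((x + n * y) ^ 3 + a₄ * (x + n * y) * y ^ 2 - a₆ * y ^ 3) ∧
        0 < 3 * (x + n * y) ^ 2 + a₄ * y ^ 2) ∧
      ∃ c : ℝ, 0 < c ∧ ∀ Y : ℝ, 2 ≤ Y →
        (Set.ncard {p : ℤ × ℤ |
            0 < p.1 ∧ (p.1 : ℝ) < Y ∧ 0 < p.2 ∧ (p.2 : ℝ) < Y ∧
            ¬ ((2 ≤ p.2 ∧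
                  ((p.2 * ((p.1 + n * p.2) ^ 3 + a₄ * (p.1 + n * p.2) * p.2 ^ 2
                      - a₆ * p.2 ^ 3) : ℤ) : ℝ)
                    > (p.2 : ℝ) * ((p.1 : ℝ) + ((n : ℝ) + A₀) * (p.2 : ℝ))) ∧
               ((p.2 * ((p.1 + n * p.2) ^ 3 + a₄ * (p.1 + n * p.2) * p.2 ^ 2
                      - a₆ * p.2 ^ 3) : ℤ) : ℝ)
                    > K * ((p.2 : ℝ) * ((p.1 : ℝ) + ((n : ℝ) + 1) * (p.2 : ℝ))) ^ (1 + ε') ∧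
               ((p.2 * ((p.1 + n * p.2) ^ 3 + a₄ * (p.1 + n * p.2) * p.2 ^ 2
                      - a₆ * p.2 ^ 3) : ℤ) : ℝ)
                    < ((p.2 : ℝ) ^ 3 * ((p.1 : ℝ) + ((n : ℝ) + 1) * (p.2 : ℝ))) ^ (1 + ε'))}
          : ℝ) ≤ c * Y ^ (2 - ε) := by
  have hε2 : (0:ℝ) < 1 - ε := by linarith
  have hε'0 : 0 < ε' := by rw [hε']; positivity
  have hε'1 : ε' ≤ 1 := by rw [hε', div_le_one hε2]; linarith
  have hprod : (1+ε') * (1-ε) = 1 := by rw [hε']; field_simp; ring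
  have hV0 : (0:ℝ) < 8*K + A₀ + 2*|(a₄:ℝ)| + 2*|(a₆:ℝ)| + 10 := by positivity
  refine ⟨⌈8*K + A₀ + 2*|(a₄:ℝ)| + 2*|(a₆:ℝ)| + 10⌉₊, Nat.ceil_pos.mpr hV0, ?_⟩
  intro n hn
  have hmge : 8*K + A₀ + 2*|(a₄:ℝ)| + 2*|(a₆:ℝ)| + 10 ≤ (n:ℝ) :=
    (Nat.le_ceil _).trans (by exact_mod_cast hn.le)
  constructor
  · intro x y hx hy
    have hnZ : |a₄| + |a₆| + 2 ≤ (n:ℤ) := by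
      have h : ((|a₄| + |a₆| + 2 : ℤ):ℝ) ≤ ((n:ℤ):ℝ) := by
        push_cast
        nlinarith [abs_nonneg (a₄:ℝ), abs_nonneg (a₆:ℝ)]
      exact_mod_cast h
    exact stmt15_int a₄ a₆ n x y hx hy hnZ
  · set m : ℝ := (n:ℝ) with hm_def
    have hm10 : 10 ≤ m := by
      nlinarith [abs_nonneg (a₄:ℝ), abs_nonneg (a₆:ℝ)]
    set y₀ : ℝ := (16*m)^(1/ε') + 2 with hy₀_def
    have hbase0 : (0:ℝ) ≤ (16*m)^(1/ε') := Real.rpow_nonneg (by positivity) _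
    have hy₀2 : 2 ≤ y₀ := by simp only [hy₀_def]; linarith
    refine ⟨y₀ + 1, by linarith, ?_⟩
    intro Y hY
    have hYpos : (0:ℝ) < Y := by linarith
    have hYe : (0:ℝ) < Y^(1-ε) := Real.rpow_pos_of_pos hYpos _
    set R : ℝ := y₀ + Y^(1-ε) with hR_def
    have hsub : {p : ℤ × ℤ |
            0 < p.1 ∧ (p.1 : ℝ) < Y ∧ 0 < p.2 ∧ (p.2 : ℝ) < Y ∧
            ¬ ((2 ≤ p.2 ∧
                  ((p.2 * ((p.1 + n * p.2) ^ 3 + a₄ * (p.1 + n * p.2) * p.2 ^ 2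
                      - a₆ * p.2 ^ 3) : ℤ) : ℝ)
                    > (p.2 : ℝ) * ((p.1 : ℝ) + ((n : ℝ) + A₀) * (p.2 : ℝ))) ∧
               ((p.2 * ((p.1 + n * p.2) ^ 3 + a₄ * (p.1 + n * p.2) * p.2 ^ 2
                      - a₆ * p.2 ^ 3) : ℤ) : ℝ)
                    > K * ((p.2 : ℝ) * ((p.1 : ℝ) + ((n : ℝ) + 1) * (p.2 : ℝ))) ^ (1 + ε') ∧
               ((p.2 * ((p.1 + n * p.2) ^ 3 + a₄ * (p.1 + n * p.2) * p.2 ^ 2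
                      - a₆ * p.2 ^ 3) : ℤ) : ℝ)
                    < ((p.2 : ℝ) ^ 3 * ((p.1 : ℝ) + ((n : ℝ) + 1) * (p.2 : ℝ))) ^ (1 + ε'))}
        ⊆ ↑(Finset.Ioo (0:ℤ) ⌈Y⌉ ×ˢ Finset.Ioo (0:ℤ) ⌈R⌉) := by
      rintro ⟨x, y⟩ ⟨hx0, hxY, hy0, hyY, hfail⟩
      have hclaim : (y:ℝ) < y₀ ∨ (y:ℝ)^(1+ε') < (x:ℝ) := by
        by_contra hcon
        push_neg at hcon
        obtain ⟨h1, h2⟩ := hcon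
        have hW2 : (2:ℝ) ≤ (y:ℝ) := le_trans hy₀2 h1
        have hX1 : (1:ℝ) ≤ (x:ℝ) := by exact_mod_cast hx0
        have hWe : 16*m ≤ (y:ℝ)^ε' := by
          have h3 : (16*m)^(1/ε') ≤ (y:ℝ) := by
            simp only [hy₀_def] at h1; linarith
          have h4 := Real.rpow_le_rpow hbase0 h3 hε'0.le
          rwa [← Real.rpow_mul (by positivity : (0:ℝ) ≤ 16*m),
            one_div_mul_cancel hε'0.ne', Real.rpow_one] at h4
        have hcore := stmt15_core (a₄:ℝ) (a₆:ℝ) K A₀ ε' m (y:ℝ) (x:ℝ)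
          hε'0 hε'1 hK hA₀ hmge hX1 hW2 hWe h2
        apply hfail
        refine ⟨⟨?_, ?_⟩, ?_, ?_⟩
        · exact_mod_cast hW2
        · push_cast; linarith [hcore.1]
        · push_cast; linarith [hcore.2.1]
        · push_cast; linarith [hcore.2.2]
      simp only [Finset.coe_product, Set.mem_prod, Finset.mem_coe, Finset.mem_Ioo]
      refine ⟨⟨hx0, Int.lt_ceil.mpr hxY⟩, hy0, Int.lt_ceil.mpr ?_⟩
      rcases hclaim with h | h
      · simp only [hR_def]; linarith
      · have hyW : (0:ℝ) < (y:ℝ) := by exact_mod_cast hy0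
        have hxx : (y:ℝ)^(1+ε') < Y := lt_trans h hxY
        have h5 : ((y:ℝ)^(1+ε'))^(1-ε) < Y^(1-ε) :=
          Real.rpow_lt_rpow (Real.rpow_nonneg hyW.le _) hxx (by linarith)
        rw [← Real.rpow_mul hyW.le, hprod, Real.rpow_one] at h5
        simp only [hR_def, hy₀_def]; linarith
    have hcard := Set.ncard_le_ncard hsub (Finset.finite_toSet _)
    rw [Set.ncard_coe_finset] at hcard
    have hcard2 : (Finset.Ioo (0:ℤ) ⌈Y⌉ ×ˢ Finset.Ioo (0:ℤ) ⌈R⌉).card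
        = (⌈Y⌉ - 0 - 1).toNat * (⌈R⌉ - 0 - 1).toNat := by
      rw [Finset.card_product, Int.card_Ioo, Int.card_Ioo]
    have htn : ∀ (S : ℝ), 0 < S → (((⌈S⌉ - 0 - 1).toNat : ℝ)) ≤ S := by
      intro S hS
      have h6 : ((((⌈S⌉ - 0 - 1).toNat : ℤ)) : ℝ) ≤ S := by
        rw [Int.toNat_eq_max]
        push_cast [Int.cast_max]
        refine max_le ?_ hS.le
        have := Int.ceil_lt_add_one S
        linarith
      exact_mod_cast h6
    have hR0 : 0 < R := by simp only [hR_def]; linarith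
    have hYle : Y ≤ Y^(2-ε) := by
      have h7 : Y^(1:ℝ) ≤ Y^(2-ε) :=
        Real.rpow_le_rpow_of_exponent_le (by linarith) (by linarith)
      rwa [Real.rpow_one] at h7
    have hYY : Y * Y^(1-ε) = Y^(2-ε) := by
      rw [show (2-ε) = 1+(1-ε) by ring, Real.rpow_add hYpos, Real.rpow_one]
    calc ((Set.ncard _ : ℕ) : ℝ)
        ≤ ((Finset.Ioo (0:ℤ) ⌈Y⌉ ×ˢ Finset.Ioo (0:ℤ) ⌈R⌉).card : ℝ) := by
          exact Nat.cast_le.mpr hcard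
      _ = ((⌈Y⌉ - 0 - 1).toNat : ℝ) * ((⌈R⌉ - 0 - 1).toNat : ℝ) := by
          rw [hcard2]; push_cast; ring
      _ ≤ Y * R := mul_le_mul (htn Y hYpos) (htn R hR0) (by positivity) hYpos.le
      _ = Y * y₀ + Y * Y^(1-ε) := by simp only [hR_def]; ring
      _ ≤ (y₀ + 1) * Y^(2-ε) := by
          rw [hYY]
          have h8 : Y * y₀ ≤ Y^(2-ε) * y₀ :=
            mul_le_mul_of_nonneg_right hYle (by linarith)
          linarith
end

section
/- Let a₄, a₆ be integers and let d be a positive integer. Then the number of pairs (u, v) of positive integers satisfying v(u³ + a₄uv² − a₆v³) = d is at most 3·τ(d), where τ(d) denotes the number of positive divisors of d. -/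
open Polynomial

noncomputable def auxP_s16 (a₄ a₆ : ℤ) (d v : ℕ) : ℤ[X] :=
  X ^ 3 + C (a₄ * (v : ℤ) ^ 2) * X - C (a₆ * (v : ℤ) ^ 3 + ((d / v : ℕ) : ℤ))

lemma auxP_natDegree (a₄ a₆ : ℤ) (d v : ℕ) : (auxP_s16 a₄ a₆ d v).natDegree = 3 := by
  unfold auxP_s16
  compute_degree!

/-- Fiber bound from the proof of Theorem 1.2: the number of pairs of positive
integers `(u, v)` with `v(u³ + a₄uv² − a₆v³) = d` is at most `3·τ(d)`. -/
theorem stmt_16 (a₄ a₆ : ℤ) (d : ℕ) (hd : 0 < d) :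
    Set.ncard {p : ℤ × ℤ | 0 < p.1 ∧ 0 < p.2 ∧
        p.2 * (p.1 ^ 3 + a₄ * p.1 * p.2 ^ 2 - a₆ * p.2 ^ 3) = (d : ℤ)}
      ≤ 3 * d.divisors.card := by
  set T : Finset (ℤ × ℤ) :=
    d.divisors.biUnion (fun v => (auxP_s16 a₄ a₆ d v).roots.toFinset.image (fun u => (u, (v : ℤ))))
    with hT
  have hsub : {p : ℤ × ℤ | 0 < p.1 ∧ 0 < p.2 ∧
        p.2 * (p.1 ^ 3 + a₄ * p.1 * p.2 ^ 2 - a₆ * p.2 ^ 3) = (d : ℤ)} ⊆ (T : Set (ℤ × ℤ)) := by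
    rintro ⟨u, v⟩ ⟨hu, hv, heq⟩
    simp only [Set.mem_setOf_eq] at *
    have hvne : v ≠ 0 := hv.ne'
    have hvd : v ∣ (d : ℤ) := ⟨_, heq.symm⟩
    have hvnat : v.toNat ∈ d.divisors := by
      rw [Nat.mem_divisors]
      exact ⟨Int.natCast_dvd_natCast.mp (by rwa [Int.toNat_of_nonneg hv.le]), hd.ne'⟩
    have hcast : ((v.toNat : ℕ) : ℤ) = v := Int.toNat_of_nonneg hv.le
    have hdd : v.toNat ∣ d := (Nat.mem_divisors.mp hvnat).1
    have hdiv : ((d / v.toNat : ℕ) : ℤ) = u ^ 3 + a₄ * u * v ^ 2 - a₆ * v ^ 3 := by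
      have h2 : (d : ℤ) = v * ((d / v.toNat : ℕ) : ℤ) := by
        rw [← hcast]
        exact_mod_cast (Nat.mul_div_cancel' hdd).symm
      have := heq.trans h2
      exact (mul_left_cancel₀ hvne this).symm
    have hroot : u ∈ (auxP_s16 a₄ a₆ d v.toNat).roots := by
      rw [mem_roots']
      constructor
      · intro h
        have h3 := auxP_natDegree a₄ a₆ d v.toNat
        rw [h] at h3
        simp at h3
      · unfold auxP_s16
        simp only [IsRoot, eval_sub, eval_add, eval_pow, eval_mul, eval_X, eval_C]
        rw [hdiv, hcast]
        ring
    show (u, v) ∈ T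
    exact Finset.mem_biUnion.mpr ⟨v.toNat, hvnat, Finset.mem_image.mpr ⟨u, Multiset.mem_toFinset.mpr hroot, by rw [hcast]⟩⟩
  have hfin : (T : Set (ℤ × ℤ)).Finite := T.finite_toSet
  calc Set.ncard _ ≤ (T : Set (ℤ × ℤ)).ncard := Set.ncard_le_ncard hsub hfin
    _ = T.card := by rw [Set.ncard_coe_finset]
    _ ≤ ∑ v ∈ d.divisors, ((auxP_s16 a₄ a₆ d v).roots.toFinset.image (fun u => (u, (v : ℤ)))).card :=
        Finset.card_biUnion_le
    _ ≤ ∑ v ∈ d.divisors, 3 := by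
        apply Finset.sum_le_sum
        intro v _
        calc _ ≤ (auxP_s16 a₄ a₆ d v).roots.toFinset.card := Finset.card_image_le
          _ ≤ Multiset.card (auxP_s16 a₄ a₆ d v).roots := Multiset.toFinset_card_le _
          _ ≤ (auxP_s16 a₄ a₆ d v).natDegree := (auxP_s16 a₄ a₆ d v).card_roots'
          _ = 3 := auxP_natDegree a₄ a₆ d v
    _ = 3 * d.divisors.card := by rw [Finset.sum_const, smul_eq_mul, mul_comm]
end
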